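/- arXiv:2210.15064 — 6 statements merged into one kernel-verified Lean document; each statement's English description precedes it below -/
import Mathlib

section
/- Let Θ and G be finite-dimensional real inner product spaces, let K be a positive integer, let C ⊆ Θ be a nonempty closed convex set, let L_1,…,L_K : Θ → G be continuous linear maps not all zero, let y_1,…,y_K ∈ G, let ω_1,…,ω_K ∈ (0,1] with ω_1+⋯+ω_K = 1, and let R : G → G be firmly nonexpansive. Suppose the variational inequality problem — find θ ∈ C such that for all ϑ ∈ C, ⟨ϑ − θ, Σ_{k=1}^K ω_k L_k*(R(L_k θ) − y_k)⟩ ≥ 0 — has at least one solution. Let γ ∈ (0, 2/max_{1≤k≤K}‖L_k‖²), let θ_0 ∈ Θ and ϑ_{1,0},…,ϑ_{K,0} ∈ Θ, and for each n ∈ ℕ let 𝕂_n be a nonempty subset of {1,…,K}. Define iteratively: for k ∈ 𝕂_n, ϑ_{k,n+1} = θ_n − γ L_k*(R(L_k θ_n) − y_k); for k ∉ 𝕂_n, ϑ_{k,n+1} = ϑ_{k,n}; and θ_{n+1} = P_C(Σ_{k=1}^K ω_k ϑ_{k,n+1}), where P_C denotes the metric projection onto C. If there exists P ∈ ℕ such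 that for every n ∈ ℕ, 𝕂_n ∪ 𝕂_{n+1} ∪ ⋯ ∪ 𝕂_{n+P−1} = {1,…,K}, then the sequence (θ_n)_{n∈ℕ} converges to a solution of the variational inequality problem. -/
open scoped RealInnerProductSpace
open Filter Topology

lemma bifb_proj_char {Θ : Type*} [NormedAddCommGroup Θ] [InnerProductSpace ℝ Θ]
    {C : Set Θ} (hCne : C.Nonempty) (hCcv : Convex ℝ C) (P : Θ → Θ)
    (hP : ∀ x : Θ, P x ∈ C ∧ ∀ c ∈ C, ‖x - P x‖ ≤ ‖x - c‖) (x : Θ) :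
    ∀ c ∈ C, ⟪x - P x, c - P x⟫ ≤ 0 := by
  haveI : Nonempty C := hCne.to_subtype
  apply (norm_eq_iInf_iff_real_inner_le_zero hCcv (hP x).1).1
  refine le_antisymm (le_ciInf fun w => (hP x).2 w w.2) ?_
  exact ciInf_le ⟨0, by rintro _ ⟨w, rfl⟩; positivity⟩ (⟨P x, (hP x).1⟩ : C)

lemma bifb_proj_unique {Θ : Type*} [NormedAddCommGroup Θ] [InnerProductSpace ℝ Θ]
    {C : Set Θ} {x p q : Θ} (hp : p ∈ C) (hq : q ∈ C)
    (h1 : ∀ c ∈ C, ⟪x - p, c - p⟫ ≤ 0) (h2 : ∀ c ∈ C, ⟪x - q, c - q⟫ ≤ 0) : p = q := by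
  have e1 := h1 q hq
  have e2 := h2 p hp
  have key : ‖q - p‖ ^ 2 ≤ 0 := by
    have hd : ⟪q - p, q - p⟫ = ⟪x - p, q - p⟫ - ⟪x - q, q - p⟫ := by
      rw [← inner_sub_left]; congr 1; abel
    have e2' : 0 ≤ ⟪x - q, q - p⟫ := by
      rw [show p - q = -(q - p) from (neg_sub _ _).symm, inner_neg_right] at e2
      linarith
    rw [← real_inner_self_eq_norm_sq, hd]; linarith
  have h0 : q - p = 0 := norm_eq_zero.1 (by nlinarith [norm_nonneg (q - p)])
  have := sub_eq_zero.1 h0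
  exact this.symm

lemma bifb_proj_firm {Θ : Type*} [NormedAddCommGroup Θ] [InnerProductSpace ℝ Θ]
    {C : Set Θ} (hCne : C.Nonempty) (hCcv : Convex ℝ C) (P : Θ → Θ)
    (hP : ∀ x : Θ, P x ∈ C ∧ ∀ c ∈ C, ‖x - P x‖ ≤ ‖x - c‖) (x z : Θ) :
    ‖P x - P z‖ ^ 2 ≤ ⟪x - z, P x - P z⟫ := by
  have h1 := bifb_proj_char hCne hCcv P hP x (P z) (hP z).1
  have h2 := bifb_proj_char hCne hCcv P hP z (P x) (hP x).1
  have e1 : 0 ≤ ⟪x - P x, P x - P z⟫ := by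
    rw [show P z - P x = -(P x - P z) from (neg_sub _ _).symm, inner_neg_right] at h1
    linarith
  have e2 : ⟪z - P z, P x - P z⟫ ≤ 0 := h2
  have hd : ⟪x - z, P x - P z⟫
      = ⟪x - P x, P x - P z⟫ - ⟪z - P z, P x - P z⟫ + ⟪P x - P z, P x - P z⟫ := by
    rw [← inner_sub_left, ← inner_add_left]; congr 1; abel
  rw [hd, real_inner_self_eq_norm_sq]; linarith

lemma bifb_sq_le {Θ : Type*} [NormedAddCommGroup Θ] [InnerProductSpace ℝ Θ]
    {a : ℝ} {u w : Θ} (ha : 0 ≤ a) (h : ‖u‖ ^ 2 ≤ ⟪w, u⟫) (hw : ‖w‖ ≤ a) : ‖u‖ ≤ a := by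
  rcases eq_or_lt_of_le (norm_nonneg u) with h0 | h0
  · rw [← h0]; exact ha
  · have := real_inner_le_norm w u
    nlinarith

lemma bifb_proj_nonexp {Θ : Type*} [NormedAddCommGroup Θ] [InnerProductSpace ℝ Θ]
    {C : Set Θ} (hCne : C.Nonempty) (hCcv : Convex ℝ C) (P : Θ → Θ)
    (hP : ∀ x : Θ, P x ∈ C ∧ ∀ c ∈ C, ‖x - P x‖ ≤ ‖x - c‖) (x z : Θ) :
    ‖P x - P z‖ ≤ ‖x - z‖ :=
  bifb_sq_le (norm_nonneg _) (bifb_proj_firm hCne hCcv P hP x z) le_rfl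

lemma bifb_wsum_sq {E : Type*} [NormedAddCommGroup E] [InnerProductSpace ℝ E]
    {K : ℕ} (w : Fin K → ℝ) (u : Fin K → E) (hw1 : ∑ k, w k = 1) :
    ∑ k, ∑ j, w k * w j * ‖u k - u j‖ ^ 2
      = 2 * (∑ k, w k * ‖u k‖ ^ 2) - 2 * ‖∑ k, w k • u k‖ ^ 2 := by
  have hinner : ‖∑ k, w k • u k‖ ^ 2 = ∑ k, ∑ j, w k * w j * ⟪u k, u j⟫ := by
    rw [← real_inner_self_eq_norm_sq, sum_inner]
    refine Finset.sum_congr rfl fun k _ => ?_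
    rw [real_inner_smul_left, inner_sum, Finset.mul_sum]
    refine Finset.sum_congr rfl fun j _ => ?_
    rw [real_inner_smul_right]; ring
  have hrow : ∀ k, ∑ j, w k * w j * ‖u k - u j‖ ^ 2
      = w k * ‖u k‖ ^ 2 + w k * (∑ j, w j * ‖u j‖ ^ 2)
        - 2 * ∑ j, w k * w j * ⟪u k, u j⟫ := by
    intro k
    have expand : ∀ j, w k * w j * ‖u k - u j‖ ^ 2
        = (w k * ‖u k‖ ^ 2) * w j + w k * (w j * ‖u j‖ ^ 2)
          - 2 * (w k * w j * ⟪u k, u j⟫) := by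
      intro j; rw [norm_sub_sq_real]; ring
    rw [Finset.sum_congr rfl fun j _ => expand j, Finset.sum_sub_distrib,
      Finset.sum_add_distrib, ← Finset.mul_sum, ← Finset.mul_sum, ← Finset.mul_sum, hw1, mul_one]
  rw [Finset.sum_congr rfl fun k _ => hrow k, Finset.sum_sub_distrib, Finset.sum_add_distrib,
    ← Finset.mul_sum, ← Finset.sum_mul, hw1, one_mul, hinner]
  ring

noncomputable def bifbA {Θ G : Type*} [NormedAddCommGroup Θ] [InnerProductSpace ℝ Θ]
    [FiniteDimensional ℝ Θ] [NormedAddCommGroup G] [InnerProductSpace ℝ G]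
    [FiniteDimensional ℝ G] {K : ℕ}
    (L : Fin K → Θ →L[ℝ] G) (R : G → G) (y : Fin K → G) (k : Fin K) (x : Θ) : Θ :=
  ContinuousLinearMap.adjoint (L k) (R (L k x) - y k)

lemma bifb_key1 {Θ G : Type*} [NormedAddCommGroup Θ] [InnerProductSpace ℝ Θ]
    [FiniteDimensional ℝ Θ] [NormedAddCommGroup G] [InnerProductSpace ℝ G]
    [FiniteDimensional ℝ G] {K : ℕ}
    (L : Fin K → Θ →L[ℝ] G) (R : G → G) (y : Fin K → G)
    (hR : ∀ z₁ z₂ : G, ‖R z₁ - R z₂‖ ^ 2 ≤ ⟪z₁ - z₂, R z₁ - R z₂⟫)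
    {β γ : ℝ} (hβ : ∀ k, ‖L k‖ ^ 2 ≤ β) (hγ0 : 0 < γ)
    (x θ' : Θ) (k : Fin K) :
    ‖(x - γ • bifbA L R y k x) - (θ' - γ • bifbA L R y k θ')‖ ^ 2
      ≤ ‖x - θ'‖ ^ 2 - (γ * (2 - γ * β)) * ‖R (L k x) - R (L k θ')‖ ^ 2 := by
  set b : Θ := bifbA L R y k x - bifbA L R y k θ' with hb
  have hre : (x - γ • bifbA L R y k x) - (θ' - γ • bifbA L R y k θ')
      = (x - θ') - γ • b := by rw [hb, smul_sub]; abel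
  have hbadj : b = ContinuousLinearMap.adjoint (L k) (R (L k x) - R (L k θ')) := by
    rw [hb]
    simp only [bifbA, ← map_sub]
    congr 1
    abel
  have hinner : ⟪x - θ', b⟫ = ⟪L k x - L k θ', R (L k x) - R (L k θ')⟫ := by
    rw [real_inner_comm, hbadj, ContinuousLinearMap.adjoint_inner_left, map_sub,
      real_inner_comm]
  have hIP : ‖R (L k x) - R (L k θ')‖ ^ 2 ≤ ⟪x - θ', b⟫ := by
    rw [hinner]; exact hR _ _
  have hbn : ‖b‖ ^ 2 ≤ β * ‖R (L k x) - R (L k θ')‖ ^ 2 := by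
    have h1 : ‖b‖ ≤ ‖L k‖ * ‖R (L k x) - R (L k θ')‖ := by
      rw [hbadj]
      calc ‖(ContinuousLinearMap.adjoint (L k)) (R (L k x) - R (L k θ'))‖
          ≤ ‖ContinuousLinearMap.adjoint (L k)‖ * ‖R (L k x) - R (L k θ')‖ :=
            ContinuousLinearMap.le_opNorm _ _
        _ = ‖L k‖ * ‖R (L k x) - R (L k θ')‖ := by
            rw [LinearIsometryEquiv.norm_map]
    have h2 := hβ k
    nlinarith [norm_nonneg b, norm_nonneg (L k), norm_nonneg (R (L k x) - R (L k θ'))]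
  rw [hre, norm_sub_sq_real, real_inner_smul_right, norm_smul]
  rw [Real.norm_eq_abs, abs_of_pos hγ0]
  nlinarith [sq_nonneg γ, norm_nonneg (R (L k x) - R (L k θ'))]

lemma bifb_sum_smul {E : Type*} [NormedAddCommGroup E] [InnerProductSpace ℝ E]
    {K : ℕ} (ω : Fin K → ℝ) (hωsum : ∑ k, ω k = 1) (x : E) (γ : ℝ) (z : Fin K → E) :
    ∑ k, ω k • (x - γ • z k) = x - γ • ∑ k, ω k • z k := by
  have h : ∀ k : Fin K, ω k • (x - γ • z k) = ω k • x - γ • (ω k • z k) := by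
    intro k; rw [smul_sub, smul_comm]
  rw [Finset.sum_congr rfl fun k _ => h k, Finset.sum_sub_distrib, ← Finset.sum_smul,
    hωsum, one_smul, ← Finset.smul_sum]

set_option maxHeartbeats 2000000 in
/-- convergence of the block-iterative forward-backward algorithm
(Algorithm 1) to a solution of the variational inequality (Proposition 1). -/
theorem block_iterative_forward_backward_converges
    {Θ G : Type*} [NormedAddCommGroup Θ] [InnerProductSpace ℝ Θ] [FiniteDimensional ℝ Θ]
    [NormedAddCommGroup G] [InnerProductSpace ℝ G] [FiniteDimensional ℝ G]
    (K : ℕ) (hK : 0 < K)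
    {C : Set Θ} (hCne : C.Nonempty) (hCcl : IsClosed C) (hCcv : Convex ℝ C)
    (L : Fin K → Θ →L[ℝ] G) (hL : ∃ k, L k ≠ 0) (y : Fin K → G)
    (ω : Fin K → ℝ) (hω : ∀ k, ω k ∈ Set.Ioc (0 : ℝ) 1) (hωsum : ∑ k, ω k = 1)
    (R : G → G) (hR : ∀ z₁ z₂ : G, ‖R z₁ - R z₂‖ ^ 2 ≤ ⟪z₁ - z₂, R z₁ - R z₂⟫)
    (hsol : ∃ θ ∈ C, ∀ ϑ ∈ C,
      0 ≤ ⟪ϑ - θ, ∑ k, ω k • ContinuousLinearMap.adjoint (L k) (R (L k θ) - y k)⟫)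
    (γ : ℝ) (hγ0 : 0 < γ)
    (hγ : γ < 2 / Finset.univ.sup' (Finset.univ_nonempty_iff.mpr ⟨⟨0, hK⟩⟩)
      (fun k => ‖L k‖ ^ 2))
    -- P is the metric projection onto C
    (P : Θ → Θ) (hP : ∀ x : Θ, P x ∈ C ∧ ∀ c ∈ C, ‖x - P x‖ ≤ ‖x - c‖)
    -- blocks selected at each iteration
    (𝕂 : ℕ → Finset (Fin K)) (h𝕂ne : ∀ n, (𝕂 n).Nonempty)
    -- the iterates of Algorithm 1
    (θ : ℕ → Θ) (v : ℕ → Fin K → Θ)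
    (hupd : ∀ n : ℕ, ∀ k ∈ 𝕂 n,
      v (n + 1) k = θ n - γ • ContinuousLinearMap.adjoint (L k) (R (L k (θ n)) - y k))
    (hkeep : ∀ n : ℕ, ∀ k ∉ 𝕂 n, v (n + 1) k = v n k)
    (hproj : ∀ n : ℕ, θ (n + 1) = P (∑ k, ω k • v (n + 1) k))
    -- every index is selected at least once within any P consecutive iterations
    (hsweep : ∃ Q : ℕ, ∀ n : ℕ,
      (Finset.range Q).biUnion (fun p => 𝕂 (n + p)) = (Finset.univ : Finset (Fin K))) :
    ∃ θstar : Θ,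
      (θstar ∈ C ∧ ∀ ϑ ∈ C,
        0 ≤ ⟪ϑ - θstar,
              ∑ k, ω k • ContinuousLinearMap.adjoint (L k) (R (L k θstar) - y k)⟫) ∧
      Tendsto θ atTop (nhds θstar) := by
  classical
  obtain ⟨Q, hQ⟩ := hsweep
  obtain ⟨θs, hθsC, hθsVI⟩ := hsol
  have hne : (Finset.univ : Finset (Fin K)).Nonempty :=
    Finset.univ_nonempty_iff.mpr ⟨⟨0, hK⟩⟩
  have hQpos : 0 < Q := by
    rcases Nat.eq_zero_or_pos Q with h | h
    · exfalso
      have h0 := hQ 0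
      rw [h] at h0
      simp only [Finset.range_zero, Finset.biUnion_empty] at h0
      obtain ⟨k, -⟩ := hne
      have : k ∈ (∅ : Finset (Fin K)) := h0 ▸ Finset.mem_univ k
      simp at this
    · exact h
  set β : ℝ := Finset.univ.sup' (Finset.univ_nonempty_iff.mpr ⟨⟨0, hK⟩⟩)
    (fun k => ‖L k‖ ^ 2) with hβdef
  have hβk : ∀ k, ‖L k‖ ^ 2 ≤ β := by
    intro k
    rw [hβdef]
    exact Finset.le_sup' (fun k => ‖L k‖ ^ 2) (Finset.mem_univ k)
  have hβpos : 0 < β := by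
    obtain ⟨k0, hk0⟩ := hL
    have h1 : 0 < ‖L k0‖ := norm_pos_iff.2 hk0
    calc (0:ℝ) < ‖L k0‖ ^ 2 := by positivity
      _ ≤ β := hβk k0
  have hγβ : γ * β < 2 := by
    rw [lt_div_iff₀ hβpos] at hγ; linarith
  set ε : ℝ := γ * (2 - γ * β) with hεdef
  have hεpos : 0 < ε := by rw [hεdef]; nlinarith
  have hωpos : ∀ k, 0 < ω k := fun k => (hω k).1
  have hRne : ∀ z₁ z₂ : G, ‖R z₁ - R z₂‖ ≤ ‖z₁ - z₂‖ := fun z₁ z₂ =>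
    bifb_sq_le (norm_nonneg _) (hR z₁ z₂) le_rfl
  have hRcont : Continuous R := by
    have h : LipschitzWith 1 R := LipschitzWith.of_dist_le_mul (fun a b => by
      rw [dist_eq_norm, dist_eq_norm, NNReal.coe_one, one_mul]; exact hRne a b)
    exact h.continuous
  have hPcont : Continuous P := by
    have h : LipschitzWith 1 P := LipschitzWith.of_dist_le_mul (fun a b => by
      rw [dist_eq_norm, dist_eq_norm, NNReal.coe_one, one_mul]
      exact bifb_proj_nonexp hCne hCcv P hP a b)
    exact h.continuous
  have hAcont : ∀ k, Continuous (bifbA L R y k) := by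
    intro k
    unfold bifbA
    exact (ContinuousLinearMap.adjoint (L k)).continuous.comp
      ((hRcont.comp (L k).continuous).sub continuous_const)
  have hwsum : ∀ x : Θ, ∑ k, ω k • (x - γ • bifbA L R y k x)
      = x - γ • ∑ k, ω k • bifbA L R y k x :=
    fun x => bifb_sum_smul ω hωsum x γ _
  have hfix : ∀ θ' ∈ C, (∀ c ∈ C, 0 ≤ ⟪c - θ', ∑ k, ω k • bifbA L R y k θ'⟫) →
      P (θ' - γ • ∑ k, ω k • bifbA L R y k θ') = θ' := by
    intro θ' hC' hVI'
    refine bifb_proj_unique (hP _).1 hC' (bifb_proj_char hCne hCcv P hP _) ?_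
    intro c hc
    have h1 : (θ' - γ • ∑ k, ω k • bifbA L R y k θ') - θ'
        = -(γ • ∑ k, ω k • bifbA L R y k θ') := by abel
    rw [h1, inner_neg_left, real_inner_smul_left, real_inner_comm]
    nlinarith [hVI' c hc]
  -- Lyapunov quantities relative to a reference point
  set t : Θ → ℕ → Fin K → ℝ :=
    fun θ' n k => ‖v n k - (θ' - γ • bifbA L R y k θ')‖ ^ 2 with htdef
  set M : Θ → ℕ → ℝ := fun θ' n => Finset.univ.sup' hne (t θ' n) with hMdef
  set Vv : Θ → ℕ → ℝ := fun θ' n => ∑ k, ω k * t θ' n k with hVdef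
  set D : Θ → ℕ → ℝ := fun θ' n => ‖θ n - θ'‖ ^ 2 with hDdef
  set rr : Fin K → ℕ → ℝ := fun k n => ‖R (L k (θ n)) - R (L k θs)‖ ^ 2 with hrdef
  have ht0 : ∀ θ' n k, 0 ≤ t θ' n k := by
    intro θ' n k; simp only [htdef]; positivity
  have htM : ∀ θ' n k, t θ' n k ≤ M θ' n := by
    intro θ' n k; simp only [hMdef]
    exact Finset.le_sup' (t θ' n) (Finset.mem_univ k)
  have hM0 : ∀ θ' n, 0 ≤ M θ' n := fun θ' n => le_trans (ht0 θ' n ⟨0, hK⟩) (htM θ' n ⟨0, hK⟩)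
  have hrr0 : ∀ k n, 0 ≤ rr k n := by
    intro k n; simp only [hrdef]; positivity
  have hθeq : ∀ n, 1 ≤ n → θ n = P (∑ k, ω k • v n k) := by
    intro n hn
    obtain ⟨m, rfl⟩ : ∃ m, n = m + 1 := ⟨n - 1, by omega⟩
    exact hproj m
  have hθC : ∀ n, 1 ≤ n → θ n ∈ C := by
    intro n hn
    rw [hθeq n hn]
    exact (hP _).1
  -- main monotonicity block, valid for any solution θ'
  have blocks : ∀ θ' ∈ C, (∀ c ∈ C, 0 ≤ ⟪c - θ', ∑ k, ω k • bifbA L R y k θ'⟫) →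
      (∀ n, 1 ≤ n →
        D θ' n ≤ ‖∑ k, ω k • (v n k - (θ' - γ • bifbA L R y k θ'))‖ ^ 2
        ∧ ‖∑ k, ω k • (v n k - (θ' - γ • bifbA L R y k θ'))‖ ^ 2 ≤ Vv θ' n
        ∧ Vv θ' n ≤ M θ' n)
      ∧ (∀ n, 1 ≤ n → M θ' (n + 1) ≤ M θ' n) := by
    intro θ' hC' hVI'
    have hfix' : P (θ' - γ • ∑ k, ω k • bifbA L R y k θ') = θ' := hfix θ' hC' hVI'
    have chain : ∀ n, 1 ≤ n →
        D θ' n ≤ ‖∑ k, ω k • (v n k - (θ' - γ • bifbA L R y k θ'))‖ ^ 2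
        ∧ ‖∑ k, ω k • (v n k - (θ' - γ • bifbA L R y k θ'))‖ ^ 2 ≤ Vv θ' n
        ∧ Vv θ' n ≤ M θ' n := by
      intro n hn
      refine ⟨?_, ?_, ?_⟩
      · -- D ≤ mid, via nonexpansiveness of P
        have hθ' : θ' = P (∑ k, ω k • (θ' - γ • bifbA L R y k θ')) := by
          rw [hwsum θ', hfix']
        have hnon := bifb_proj_nonexp hCne hCcv P hP (∑ k, ω k • v n k)
          (∑ k, ω k • (θ' - γ • bifbA L R y k θ'))
        have hdiff : (∑ k, ω k • v n k) - ∑ k, ω k • (θ' - γ • bifbA L R y k θ')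
            = ∑ k, ω k • (v n k - (θ' - γ • bifbA L R y k θ')) := by
          rw [← Finset.sum_sub_distrib]
          exact Finset.sum_congr rfl fun k _ => (smul_sub _ _ _).symm
        simp only [hDdef]
        have heq : ‖θ n - θ'‖ = ‖P (∑ k, ω k • v n k)
            - P (∑ k, ω k • (θ' - γ • bifbA L R y k θ'))‖ := by
          rw [← hθeq n hn, ← hθ']
        rw [heq]
        rw [hdiff] at hnon
        have := pow_le_pow_left₀ (norm_nonneg _) hnon 2
        exact this
      · -- mid ≤ Vv, by Jensen (via the weighted-sum identity)
        have hid := bifb_wsum_sq ω (fun k => v n k - (θ' - γ • bifbA L R y k θ')) hωsum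
        have hnn : (0:ℝ) ≤ ∑ k, ∑ j, ω k * ω j *
            ‖(v n k - (θ' - γ • bifbA L R y k θ'))
              - (v n j - (θ' - γ • bifbA L R y j θ'))‖ ^ 2 :=
          Finset.sum_nonneg fun k _ => Finset.sum_nonneg fun j _ => by
            have := (hωpos k).le
            have := (hωpos j).le
            positivity
        simp only [hVdef]
        simp only [htdef]
        linarith
      · -- Vv ≤ M
        simp only [hVdef, hMdef]
        calc ∑ k, ω k * t θ' n k
            ≤ ∑ k, ω k * Finset.univ.sup' hne (t θ' n) := by
              refine Finset.sum_le_sum fun k _ => ?_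
              exact mul_le_mul_of_nonneg_left (Finset.le_sup' (t θ' n) (Finset.mem_univ k))
                (hωpos k).le
          _ = Finset.univ.sup' hne (t θ' n) := by
              rw [← Finset.sum_mul, hωsum, one_mul]
    refine ⟨chain, ?_⟩
    intro n hn
    obtain ⟨c1, c2, c3⟩ := chain n hn
    simp only [hMdef]
    apply Finset.sup'_le
    intro k _
    by_cases hk : k ∈ 𝕂 n
    · have hv : v (n + 1) k = θ n - γ • bifbA L R y k (θ n) := hupd n k hk
      have hkey := bifb_key1 L R y hR hβk hγ0 (θ n) θ' k
      have hr0 : (0:ℝ) ≤ (γ * (2 - γ * β)) * ‖R (L k (θ n)) - R (L k θ')‖ ^ 2 := by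
        have h2 : (0:ℝ) < γ * (2 - γ * β) := by nlinarith
        positivity
      have hDn : D θ' n = ‖θ n - θ'‖ ^ 2 := by simp only [hDdef]
      have h1 : t θ' (n + 1) k ≤ ‖θ n - θ'‖ ^ 2 := by
        simp only [htdef]
        rw [hv]
        linarith
      simp only [htdef] at h1 ⊢
      linarith
    · have hv : v (n + 1) k = v n k := hkeep n k hk
      simp only [htdef]
      rw [hv]
      have := htM θ' n k
      simp only [htdef, hMdef] at this
      exact this
  obtain ⟨chainS, monoS⟩ := blocks θs hθsC hθsVI
  -- antitone facts for M θs
  have hanti : ∀ m n, 1 ≤ m → m ≤ n → M θs n ≤ M θs m := by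
    intro m n h1 h2
    induction n, h2 using Nat.le_induction with
    | base => exact le_rfl
    | succ n hn ih => exact le_trans (monoS n (by omega)) ih
  have hbdd : BddBelow (Set.range fun n => M θs (n + 1)) :=
    ⟨0, by rintro _ ⟨n, rfl⟩; exact hM0 _ _⟩
  set μ : ℝ := ⨅ n, M θs (n + 1) with hμdef
  have hμlim : Tendsto (fun n => M θs (n + 1)) atTop (𝓝 μ) :=
    tendsto_atTop_ciInf (antitone_nat_of_succ_le fun n => monoS (n + 1) (by omega)) hbdd
  have hμle : ∀ n, μ ≤ M θs (n + 1) := fun n => ciInf_le hbdd n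
  have hμle' : ∀ n, 1 ≤ n → μ ≤ M θs n := by
    intro n hn
    have := hμle (n - 1)
    rwa [Nat.sub_add_cancel hn] at this
  -- persistence of stored vectors
  have hpersist : ∀ (k : Fin K) (j m : ℕ), j ≤ m → (∀ i, j ≤ i → i < m → k ∉ 𝕂 i) →
      v m k = v j k := by
    intro k j m hjm hnot
    induction m with
    | zero =>
      have hj : j = 0 := by omega
      rw [hj]
    | succ m ih =>
      rcases Nat.lt_or_ge j (m + 1) with h | h
      · have hjm' : j ≤ m := by omega
        rw [hkeep m k (hnot m hjm' (by omega)), ih hjm' (fun i h1 h2 => hnot i h1 (by omega))]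
      · have : j = m + 1 := by omega
        rw [this]
  -- last update within a sweep window
  have hlastval : ∀ n k, Q ≤ n → ∃ j, j < n ∧ n ≤ j + Q
      ∧ v n k = θ j - γ • bifbA L R y k (θ j)
      ∧ t θs n k ≤ D θs j - ε * rr k j := by
    intro n k hQn
    have h1 : ∃ p, p < Q ∧ k ∈ 𝕂 (n - Q + p) := by
      have hk : k ∈ (Finset.range Q).biUnion (fun p => 𝕂 (n - Q + p)) :=
        (hQ (n - Q)) ▸ Finset.mem_univ k
      obtain ⟨p, hp, hkp⟩ := Finset.mem_biUnion.1 hk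
      exact ⟨p, Finset.mem_range.1 hp, hkp⟩
    obtain ⟨p, hpQ, hkp⟩ := h1
    set j := Nat.findGreatest (fun i => k ∈ 𝕂 i) (n - 1) with hjdef
    have hj0 : n - Q + p ≤ n - 1 := by omega
    have hjge : n - Q + p ≤ j := Nat.le_findGreatest (P := fun i => k ∈ 𝕂 i) hj0 hkp
    have hjP : k ∈ 𝕂 j := Nat.findGreatest_spec (P := fun i => k ∈ 𝕂 i) hj0 hkp
    have hjle : j ≤ n - 1 := Nat.findGreatest_le _
    have hvj : v n k = v (j + 1) k := by
      refine hpersist k (j + 1) n (by omega) ?_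
      intro i h1 h2
      exact Nat.findGreatest_is_greatest (P := fun i => k ∈ 𝕂 i) (n := n - 1) (k := i) (by omega) (by omega)
    have hv : v n k = θ j - γ • bifbA L R y k (θ j) := by
      rw [hvj]; exact hupd j k hjP
    refine ⟨j, by omega, by omega, hv, ?_⟩
    have hkey := bifb_key1 L R y hR hβk hγ0 (θ j) θs k
    simp only [htdef, hDdef, hrdef, hεdef]
    rw [hv]
    exact hkey
  -- good times
  have hgood : ∀ n : ℕ, ∃ j, n + Q + 1 ≤ j ∧ j ≤ n + 2 * Q
      ∧ M θs (n + 2 * Q + 1) ≤ D θs j := by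
    intro n
    obtain ⟨k0, -, hk0⟩ := Finset.exists_mem_eq_sup' hne (t θs (n + 2 * Q + 1))
    obtain ⟨j, hj1, hj2, hj3, hj4⟩ := hlastval (n + 2 * Q + 1) k0 (by omega)
    refine ⟨j, by omega, by omega, ?_⟩
    have h5 : 0 ≤ ε * rr k0 j := mul_nonneg hεpos.le (hrr0 k0 j)
    have hMm : M θs (n + 2 * Q + 1) = t θs (n + 2 * Q + 1) k0 := by
      simp only [hMdef]; exact hk0
    linarith
  choose g hg1 hg2 hg3 using hgood
  have hgQ : ∀ n, Q ≤ g n := fun n => by have := hg1 n; omega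
  have hg1' : ∀ n, 1 ≤ g n := fun n => by have := hg1 n; have := hQpos; omega
  -- last-update times for each component at the good times
  have hexu : ∀ n (k : Fin K), ∃ j, j < g n ∧ g n ≤ j + Q
      ∧ v (g n) k = θ j - γ • bifbA L R y k (θ j)
      ∧ t θs (g n) k ≤ D θs j - ε * rr k j := fun n k => hlastval (g n) k (hgQ n)
  choose u hu1 hu2 hu3 hu4 using hexu
  have hun : ∀ n k, n + 1 ≤ u n k := by
    intro n k
    have := hu2 n k
    have := hg1 n
    omega
  -- limits along good times
  have hshift : ∀ c : ℕ, Tendsto (fun n => M θs (n + c + 1)) atTop (𝓝 μ) := by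
    intro c
    exact hμlim.comp (tendsto_add_atTop_nat c)
  have hDg : Tendsto (fun n => D θs (g n)) atTop (𝓝 μ) := by
    have hup : ∀ n, D θs (g n) ≤ M θs (n + 1) := by
      intro n
      obtain ⟨c1, c2, c3⟩ := chainS (g n) (hg1' n)
      have h4 : M θs (g n) ≤ M θs (n + 1) := hanti (n + 1) (g n) (by omega)
        (by have := hg1 n; omega)
      linarith
    exact tendsto_of_tendsto_of_tendsto_of_le_of_le (hshift (2 * Q)) hμlim hg3 hup
  have hVg : Tendsto (fun n => Vv θs (g n)) atTop (𝓝 μ) := by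
    have hlow : ∀ n, D θs (g n) ≤ Vv θs (g n) := by
      intro n
      obtain ⟨c1, c2, c3⟩ := chainS (g n) (hg1' n)
      linarith
    have hup : ∀ n, Vv θs (g n) ≤ M θs (n + 1) := by
      intro n
      obtain ⟨c1, c2, c3⟩ := chainS (g n) (hg1' n)
      have h4 : M θs (g n) ≤ M θs (n + 1) := hanti (n + 1) (g n) (by omega)
        (by have := hg1 n; omega)
      linarith
    exact tendsto_of_tendsto_of_tendsto_of_le_of_le hDg hμlim hlow hup
  have hMg : Tendsto (fun n => M θs (g n)) atTop (𝓝 μ) := by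
    have hlow : ∀ n, Vv θs (g n) ≤ M θs (g n) := fun n => (chainS (g n) (hg1' n)).2.2
    have hup : ∀ n, M θs (g n) ≤ M θs (n + 1) := fun n => hanti (n + 1) (g n) (by omega)
      (by have := hg1 n; omega)
    exact tendsto_of_tendsto_of_tendsto_of_le_of_le hVg hμlim hlow hup
  have htg : ∀ k, Tendsto (fun n => t θs (g n) k) atTop (𝓝 μ) := by
    intro k
    have hup : ∀ n, t θs (g n) k ≤ M θs (g n) := fun n => htM _ _ _
    have hlow : ∀ n, M θs (g n) - (M θs (g n) - Vv θs (g n)) / ω k ≤ t θs (g n) k := by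
      intro n
      have hsingle : ω k * (M θs (g n) - t θs (g n) k) ≤ M θs (g n) - Vv θs (g n) := by
        have hsum : ∑ j, ω j * (M θs (g n) - t θs (g n) j) = M θs (g n) - Vv θs (g n) := by
          rw [Finset.sum_congr rfl (fun j _ => mul_sub (ω j) _ _), Finset.sum_sub_distrib,
            ← Finset.sum_mul, hωsum, one_mul]
        rw [← hsum]
        exact Finset.single_le_sum
          (f := fun j => ω j * (M θs (g n) - t θs (g n) j))
          (fun j _ => mul_nonneg (hωpos j).le (by linarith [htM θs (g n) j]))
          (Finset.mem_univ k)
      have h2 : M θs (g n) - t θs (g n) k ≤ (M θs (g n) - Vv θs (g n)) / ω k := by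
        rw [le_div_iff₀ (hωpos k), mul_comm]
        exact hsingle
      linarith
    have hlowlim : Tendsto (fun n => M θs (g n) - (M θs (g n) - Vv θs (g n)) / ω k)
        atTop (𝓝 μ) := by
      have h := hMg.sub ((hMg.sub hVg).div_const (ω k))
      simpa using h
    exact tendsto_of_tendsto_of_tendsto_of_le_of_le hlowlim hMg hlow hup
  have hDu : ∀ k, Tendsto (fun n => D θs (u n k)) atTop (𝓝 μ) := by
    intro k
    have hlow : ∀ n, t θs (g n) k ≤ D θs (u n k) := by
      intro n
      have h1 := hu4 n k
      have h2 := mul_nonneg hεpos.le (hrr0 k (u n k))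
      linarith
    have hup : ∀ n, D θs (u n k) ≤ M θs (n + 1) := by
      intro n
      obtain ⟨c1, c2, c3⟩ := chainS (u n k) (by have := hun n k; omega)
      have h4 : M θs (u n k) ≤ M θs (n + 1) := hanti (n + 1) (u n k) (by omega) (hun n k)
      linarith
    exact tendsto_of_tendsto_of_tendsto_of_le_of_le (htg k) hμlim hlow hup
  have hru : ∀ k, Tendsto (fun n => rr k (u n k)) atTop (𝓝 0) := by
    intro k
    have hup : ∀ n, rr k (u n k) ≤ (D θs (u n k) - t θs (g n) k) / ε := by
      intro n
      rw [le_div_iff₀ hεpos, mul_comm]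
      linarith [hu4 n k]
    have huplim : Tendsto (fun n => (D θs (u n k) - t θs (g n) k) / ε) atTop (𝓝 0) := by
      have h := ((hDu k).sub (htg k)).div_const ε
      simpa using h
    exact tendsto_of_tendsto_of_tendsto_of_le_of_le tendsto_const_nhds huplim
      (fun n => hrr0 _ _) hup
  -- boundedness of the iterates
  set ρ : ℝ := Real.sqrt (M θs 1) + ‖θs‖ with hρdef
  have hρ0 : 0 ≤ ρ := by
    rw [hρdef]
    have := Real.sqrt_nonneg (M θs 1)
    have := norm_nonneg θs
    linarith
  have hθbd : ∀ n, 1 ≤ n → ‖θ n‖ ≤ ρ := by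
    intro n hn
    have h1 : D θs n ≤ M θs 1 := by
      obtain ⟨c1, c2, c3⟩ := chainS n hn
      have h4 := hanti 1 n le_rfl hn
      linarith
    have h2 : ‖θ n - θs‖ ≤ Real.sqrt (M θs 1) := by
      have h3 : ‖θ n - θs‖ = Real.sqrt (D θs n) := by
        simp only [hDdef]
        rw [Real.sqrt_sq (norm_nonneg _)]
      rw [h3]
      exact Real.sqrt_le_sqrt h1
    calc ‖θ n‖ = ‖(θ n - θs) + θs‖ := by rw [sub_add_cancel]
      _ ≤ ‖θ n - θs‖ + ‖θs‖ := norm_add_le _ _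
      _ ≤ ρ := by rw [hρdef]; linarith
  set F : ℕ → (Option (Fin K) → Θ) :=
    fun n i => Option.elim i (θ (g n)) (fun k => θ (u n k)) with hFdef
  have hFmem : ∀ n, F n ∈ Metric.closedBall (0 : Option (Fin K) → Θ) ρ := by
    intro n
    rw [Metric.mem_closedBall, dist_zero_right]
    rw [pi_norm_le_iff_of_nonneg hρ0]
    intro i
    cases i with
    | none => exact hθbd (g n) (hg1' n)
    | some k => exact hθbd (u n k) (by have := hun n k; omega)
  obtain ⟨a, -, φ, hφ, hFφ⟩ :=
    tendsto_subseq_of_bounded (Metric.isBounded_closedBall) hFmem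
  have hφat : Tendsto φ atTop atTop := hφ.tendsto_atTop
  have hθgφ : Tendsto (fun n => θ (g (φ n))) atTop (𝓝 (a none)) :=
    tendsto_pi_nhds.1 hFφ none
  have hθuφ : ∀ k, Tendsto (fun n => θ (u (φ n) k)) atTop (𝓝 (a (some k))) :=
    fun k => tendsto_pi_nhds.1 hFφ (some k)
  -- residuals vanish at the cluster point
  have hReq : ∀ k, R (L k (a (some k))) = R (L k θs) := by
    intro k
    have h1 : Tendsto (fun n => rr k (u (φ n) k)) atTop (𝓝 0) := (hru k).comp hφat
    have hcont : Continuous fun x : Θ => ‖R (L k x) - R (L k θs)‖ ^ 2 :=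
      (((hRcont.comp (L k).continuous).sub continuous_const).norm).pow 2
    have h2 : Tendsto (fun n => rr k (u (φ n) k)) atTop
        (𝓝 (‖R (L k (a (some k))) - R (L k θs)‖ ^ 2)) := by
      simp only [hrdef]
      exact (hcont.tendsto _).comp (hθuφ k)
    have h3 := tendsto_nhds_unique h2 h1
    have h4 : ‖R (L k (a (some k))) - R (L k θs)‖ = 0 :=
      pow_eq_zero_iff (by norm_num) |>.1 h3
    exact sub_eq_zero.1 (norm_eq_zero.1 h4)
  have hAeq : ∀ k, bifbA L R y k (a (some k)) = bifbA L R y k θs := by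
    intro k
    unfold bifbA
    rw [hReq k]
  have hnka : ∀ k, ‖a (some k) - θs‖ ^ 2 = μ := by
    intro k
    have h1 := (hDu k).comp hφat
    have hcont : Continuous fun x : Θ => ‖x - θs‖ ^ 2 :=
      ((continuous_id.sub continuous_const).norm).pow 2
    have h2 : Tendsto (fun n => D θs (u (φ n) k)) atTop (𝓝 (‖a (some k) - θs‖ ^ 2)) := by
      simp only [hDdef]
      exact (hcont.tendsto _).comp (hθuφ k)
    exact tendsto_nhds_unique h2 h1
  have hvφ : ∀ k, Tendsto (fun n => v (g (φ n)) k) atTop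
      (𝓝 (a (some k) - γ • bifbA L R y k (a (some k)))) := by
    intro k
    have heq : (fun n => v (g (φ n)) k)
        = fun n => θ (u (φ n) k) - γ • bifbA L R y k (θ (u (φ n) k)) :=
      funext fun n => hu3 (φ n) k
    rw [heq]
    have hcont : Continuous fun x : Θ => x - γ • bifbA L R y k x :=
      continuous_id.sub ((hAcont k).const_smul γ)
    exact (hcont.tendsto _).comp (hθuφ k)
  -- Jensen equality in the limit
  have hmid : Tendsto
      (fun n => ‖∑ k, ω k • (v (g (φ n)) k - (θs - γ • bifbA L R y k θs))‖ ^ 2)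
      atTop (𝓝 μ) := by
    have hlow : ∀ n, D θs (g (φ n))
        ≤ ‖∑ k, ω k • (v (g (φ n)) k - (θs - γ • bifbA L R y k θs))‖ ^ 2 :=
      fun n => (chainS (g (φ n)) (hg1' (φ n))).1
    have hup : ∀ n, ‖∑ k, ω k • (v (g (φ n)) k - (θs - γ • bifbA L R y k θs))‖ ^ 2
        ≤ Vv θs (g (φ n)) :=
      fun n => (chainS (g (φ n)) (hg1' (φ n))).2.1
    exact tendsto_of_tendsto_of_tendsto_of_le_of_le (hDg.comp hφat) (hVg.comp hφat) hlow hup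
  have hmid2 : Tendsto
      (fun n => ‖∑ k, ω k • (v (g (φ n)) k - (θs - γ • bifbA L R y k θs))‖ ^ 2)
      atTop (𝓝 (‖∑ k, ω k • (a (some k) - θs)‖ ^ 2)) := by
    have hsumt : Tendsto (fun n => ∑ k, ω k • (v (g (φ n)) k - (θs - γ • bifbA L R y k θs)))
        atTop (𝓝 (∑ k, ω k • (a (some k) - θs))) := by
      refine tendsto_finset_sum _ fun k _ => ?_
      have h1 : Tendsto (fun n => v (g (φ n)) k - (θs - γ • bifbA L R y k θs)) atTop
          (𝓝 ((a (some k) - γ • bifbA L R y k (a (some k))) - (θs - γ • bifbA L R y k θs))) :=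
        (hvφ k).sub tendsto_const_nhds
      have h2 : (a (some k) - γ • bifbA L R y k (a (some k))) - (θs - γ • bifbA L R y k θs)
          = a (some k) - θs := by
        rw [hAeq k]; abel
      rw [h2] at h1
      exact h1.const_smul (ω k)
    exact ((continuous_norm.pow 2).tendsto _).comp hsumt
  have hJ : ‖∑ k, ω k • (a (some k) - θs)‖ ^ 2 = μ := tendsto_nhds_unique hmid2 hmid
  -- the component limits all coincide
  have hsame : ∀ k j : Fin K, a (some k) = a (some j) := by
    have hid := bifb_wsum_sq ω (fun k => a (some k) - θs) hωsum
    have hsum1 : ∑ k, ω k * ‖a (some k) - θs‖ ^ 2 = μ := by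
      rw [Finset.sum_congr rfl fun k _ => by rw [hnka k], ← Finset.sum_mul, hωsum, one_mul]
    have hzero : ∑ k, ∑ j, ω k * ω j * ‖(a (some k) - θs) - (a (some j) - θs)‖ ^ 2 = 0 := by
      rw [hid, hsum1, hJ]; ring
    intro k j
    have hnn1 : ∀ k' ∈ Finset.univ, (0:ℝ)
        ≤ ∑ j', ω k' * ω j' * ‖(a (some k') - θs) - (a (some j') - θs)‖ ^ 2 :=
      fun k' _ => Finset.sum_nonneg fun j' _ =>
        mul_nonneg (mul_nonneg (hωpos k').le (hωpos j').le) (by positivity)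
    have h1 := (Finset.sum_eq_zero_iff_of_nonneg hnn1).1 hzero k (Finset.mem_univ k)
    have hnn2 : ∀ j' ∈ Finset.univ, (0:ℝ)
        ≤ ω k * ω j' * ‖(a (some k) - θs) - (a (some j') - θs)‖ ^ 2 :=
      fun j' _ => mul_nonneg (mul_nonneg (hωpos k).le (hωpos j').le) (by positivity)
    have h2 := (Finset.sum_eq_zero_iff_of_nonneg hnn2).1 h1 j (Finset.mem_univ j)
    have hωkj : 0 < ω k * ω j := mul_pos (hωpos k) (hωpos j)
    have h3 : ‖(a (some k) - θs) - (a (some j) - θs)‖ ^ 2 = 0 := by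
      rcases mul_eq_zero.1 h2 with h | h
      · exact absurd h hωkj.ne'
      · exact h
    have h4 : (a (some k) - θs) - (a (some j) - θs) = 0 :=
      norm_eq_zero.1 (pow_eq_zero_iff (by norm_num) |>.1 h3)
    have h5 : a (some k) - a (some j) = 0 := by
      rw [← h4]; abel
    exact sub_eq_zero.1 h5
  set θh : Θ := a (some ⟨0, hK⟩) with hθhdef
  have hsame' : ∀ k, a (some k) = θh := fun k => hsame k ⟨0, hK⟩
  have hθhC : θh ∈ C := by
    refine hCcl.mem_of_tendsto (hθuφ ⟨0, hK⟩) (Filter.Eventually.of_forall fun n => ?_)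
    exact hθC (u (φ n) ⟨0, hK⟩) (by have := hun (φ n) ⟨0, hK⟩; omega)
  -- identify the limit of θ along the good times
  have hθgP : Tendsto (fun n => θ (g (φ n))) atTop
      (𝓝 (P (θh - γ • ∑ k, ω k • bifbA L R y k θs))) := by
    have heq : (fun n => θ (g (φ n))) = fun n => P (∑ k, ω k • v (g (φ n)) k) :=
      funext fun n => hθeq (g (φ n)) (hg1' (φ n))
    rw [heq]
    have hsumt : Tendsto (fun n => ∑ k, ω k • v (g (φ n)) k) atTop
        (𝓝 (∑ k, ω k • (θh - γ • bifbA L R y k θs))) := by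
      refine tendsto_finset_sum _ fun k _ => ?_
      have h1 := (hvφ k).const_smul (ω k)
      have h2 : a (some k) - γ • bifbA L R y k (a (some k)) = θh - γ • bifbA L R y k θs := by
        rw [hAeq k, hsame' k]
      rw [h2] at h1
      exact h1
    have hval : ∑ k, ω k • (θh - γ • bifbA L R y k θs)
        = θh - γ • ∑ k, ω k • bifbA L R y k θs := bifb_sum_smul ω hωsum θh γ _
    rw [← hval]
    exact (hPcont.tendsto _).comp hsumt
  have hanone : a none = P (θh - γ • ∑ k, ω k • bifbA L R y k θs) :=
    tendsto_nhds_unique hθgφ hθgP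
  have hanorm : ‖a none - θs‖ ^ 2 = μ := by
    have hcont : Continuous fun x : Θ => ‖x - θs‖ ^ 2 :=
      ((continuous_id.sub continuous_const).norm).pow 2
    have h2 : Tendsto (fun n => D θs (g (φ n))) atTop (𝓝 (‖a none - θs‖ ^ 2)) := by
      simp only [hDdef]
      exact (hcont.tendsto _).comp hθgφ
    exact tendsto_nhds_unique h2 (hDg.comp hφat)
  -- firm nonexpansiveness forces a none = θh
  have hfixs : P (θs - γ • ∑ k, ω k • bifbA L R y k θs) = θs := hfix θs hθsC hθsVI
  have hfirm := bifb_proj_firm hCne hCcv P hP (θh - γ • ∑ k, ω k • bifbA L R y k θs)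
    (θs - γ • ∑ k, ω k • bifbA L R y k θs)
  rw [hfixs, ← hanone] at hfirm
  have hbus : (θh - γ • ∑ k, ω k • bifbA L R y k θs)
      - (θs - γ • ∑ k, ω k • bifbA L R y k θs) = θh - θs := by abel
  rw [hbus] at hfirm
  have hkeyeq : a none = θh := by
    have hexp : ‖(θh - θs) - (a none - θs)‖ ^ 2
        = ‖θh - θs‖ ^ 2 - 2 * ⟪θh - θs, a none - θs⟫ + ‖a none - θs‖ ^ 2 :=
      norm_sub_sq_real _ _
    have hmm : (θh - θs) - (a none - θs) = θh - a none := by abel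
    rw [hmm] at hexp
    have h2 : ‖θh - θs‖ ^ 2 = μ := hnka ⟨0, hK⟩
    have h0 : ‖θh - a none‖ ^ 2 ≤ 0 := by
      rw [hexp]
      linarith [hfirm, hanorm, h2]
    have h1 : θh - a none = 0 := norm_eq_zero.1 (by nlinarith [norm_nonneg (θh - a none)])
    exact (sub_eq_zero.1 h1).symm
  have hAseq : ∑ k, ω k • bifbA L R y k θh = ∑ k, ω k • bifbA L R y k θs := by
    refine Finset.sum_congr rfl fun k _ => ?_
    rw [show bifbA L R y k θh = bifbA L R y k θs from by rw [← hsame' k]; exact hAeq k]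
  have hfixh : P (θh - γ • ∑ k, ω k • bifbA L R y k θh) = θh := by
    rw [hAseq, ← hanone, hkeyeq]
  have hθhVI : ∀ c ∈ C, 0 ≤ ⟪c - θh, ∑ k, ω k • bifbA L R y k θh⟫ := by
    intro c hc
    have hc2 := bifb_proj_char hCne hCcv P hP (θh - γ • ∑ k, ω k • bifbA L R y k θh) c hc
    rw [hfixh] at hc2
    have h1 : (θh - γ • ∑ k, ω k • bifbA L R y k θh) - θh
        = -(γ • ∑ k, ω k • bifbA L R y k θh) := by abel
    rw [h1, inner_neg_left, real_inner_smul_left] at hc2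
    have h3 : 0 ≤ ⟪∑ k, ω k • bifbA L R y k θh, c - θh⟫ := by
      by_contra h
      push_neg at h
      have := mul_neg_of_pos_of_neg hγ0 h
      linarith
    rw [real_inner_comm]
    exact h3
  -- final convergence, via the Fejér quantity relative to θh
  obtain ⟨chainH, monoH⟩ := blocks θh hθhC hθhVI
  have hth0 : ∀ k, Tendsto (fun n => t θh (g (φ n)) k) atTop (𝓝 0) := by
    intro k
    have hcont : Continuous fun x : Θ => ‖x - (θh - γ • bifbA L R y k θh)‖ ^ 2 :=
      ((continuous_id.sub continuous_const).norm).pow 2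
    have h1 : Tendsto (fun n => t θh (g (φ n)) k) atTop
        (𝓝 (‖(a (some k) - γ • bifbA L R y k (a (some k)))
          - (θh - γ • bifbA L R y k θh)‖ ^ 2)) := by
      simp only [htdef]
      exact (hcont.tendsto _).comp (hvφ k)
    have h2 : (a (some k) - γ • bifbA L R y k (a (some k)))
        - (θh - γ • bifbA L R y k θh) = 0 := by
      rw [hsame' k]; abel
    rw [h2] at h1
    simpa using h1
  have hMh0 : Tendsto (fun n => M θh (g (φ n))) atTop (𝓝 0) := by
    have hup : ∀ n, M θh (g (φ n)) ≤ ∑ k, t θh (g (φ n)) k := by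
      intro n
      simp only [hMdef]
      apply Finset.sup'_le
      intro k _
      have := Finset.single_le_sum (f := fun k => t θh (g (φ n)) k)
        (fun j _ => ht0 _ _ _) (Finset.mem_univ k)
      simp only [htdef] at this ⊢
      exact this
    have hsum0 : Tendsto (fun n => ∑ k, t θh (g (φ n)) k) atTop (𝓝 0) := by
      have h := tendsto_finset_sum Finset.univ (fun k (_ : k ∈ Finset.univ) => hth0 k)
      simpa using h
    exact tendsto_of_tendsto_of_tendsto_of_le_of_le tendsto_const_nhds hsum0
      (fun n => hM0 _ _) hup
  have hbddh : BddBelow (Set.range fun n => M θh (n + 1)) :=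
    ⟨0, by rintro _ ⟨n, rfl⟩; exact hM0 _ _⟩
  have hMhlim : Tendsto (fun n => M θh (n + 1)) atTop (𝓝 (⨅ n, M θh (n + 1))) :=
    tendsto_atTop_ciInf (antitone_nat_of_succ_le fun n => monoH (n + 1) (by omega)) hbddh
  have hinf0 : (⨅ n, M θh (n + 1)) = 0 := by
    refine le_antisymm ?_ (le_ciInf fun n => hM0 _ _)
    have hle : ∀ n, (⨅ n, M θh (n + 1)) ≤ M θh (g (φ n)) := by
      intro n
      have h1 : 1 ≤ g (φ n) := hg1' (φ n)
      have h2 := ciInf_le hbddh (g (φ n) - 1)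
      rwa [Nat.sub_add_cancel h1] at h2
    exact ge_of_tendsto hMh0 (Filter.Eventually.of_forall hle)
  rw [hinf0] at hMhlim
  have hvconv : ∀ k, Tendsto (fun n => v (n + 1) k) atTop
      (𝓝 (θh - γ • bifbA L R y k θh)) := by
    intro k
    have hsq : Tendsto (fun n => ‖v (n + 1) k - (θh - γ • bifbA L R y k θh)‖ ^ 2)
        atTop (𝓝 0) := by
      have hup : ∀ n, ‖v (n + 1) k - (θh - γ • bifbA L R y k θh)‖ ^ 2 ≤ M θh (n + 1) := by
        intro n
        have h := htM θh (n + 1) k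
        simp only [htdef] at h
        exact h
      exact tendsto_of_tendsto_of_tendsto_of_le_of_le tendsto_const_nhds hMhlim
        (fun n => by positivity) hup
    have hnrm : Tendsto (fun n => ‖v (n + 1) k - (θh - γ • bifbA L R y k θh)‖)
        atTop (𝓝 0) := by
      have h1 := (Real.continuous_sqrt.tendsto 0).comp hsq
      have h1' := h1.congr
        (fun n => Real.sqrt_sq (norm_nonneg (v (n + 1) k - (θh - γ • bifbA L R y k θh))))
      simpa using h1'
    exact tendsto_iff_norm_sub_tendsto_zero.2 hnrm
  have hθconv1 : Tendsto (fun n => θ (n + 1)) atTop (𝓝 θh) := by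
    have hsl : Tendsto (fun n => ∑ k, ω k • v (n + 1) k) atTop
        (𝓝 (∑ k, ω k • (θh - γ • bifbA L R y k θh))) := by
      refine tendsto_finset_sum _ fun k _ => ?_
      exact (hvconv k).const_smul (ω k)
    have heq : (fun n => θ (n + 1)) = fun n => P (∑ k, ω k • v (n + 1) k) := funext hproj
    rw [heq]
    have h := (hPcont.tendsto _).comp hsl
    rw [hwsum θh, hfixh] at h
    exact h
  have hθconv : Tendsto θ atTop (𝓝 θh) := (tendsto_add_atTop_iff_nat 1).1 hθconv1
  exact ⟨θh, ⟨hθhC, hθhVI⟩, hθconv⟩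
end

section
/- Let Θ and G be finite-dimensional real inner product spaces, let K be a positive integer, let C ⊆ Θ be a nonempty closed convex set, let L_1,…,L_K : Θ → G be continuous linear maps not all zero, let y_1,…,y_K ∈ G, let ω_1,…,ω_K ∈ (0,1] with ω_1+⋯+ω_K = 1, and let R : G → G be firmly nonexpansive. Suppose the variational inequality problem — find θ ∈ C such that for all ϑ ∈ C, ⟨ϑ − θ, Σ_{k=1}^K ω_k L_k*(R(L_k θ) − y_k)⟩ ≥ 0 — has at least one solution. Let (𝕂_j)_{1≤j≤J} be a partition of {1,…,K} into nonempty sets, let γ ∈ (0, 2/max_{1≤k≤K}‖L_k‖²), let θ_0 ∈ Θ, let θ̄_{1,0},…,θ̄_{J,0} ∈ Θ, and set θ̄_0 = Σ_{j=1}^J θ̄_{j,0}. For each n ∈ ℕ select j_n ∈ {1,…,J}, and define: θ̄_{j_n,n+1} = Σ_{k∈𝕂_{j_n}} ω_k (θ_n − γ L_k*(R(L_k θ_n) − y_k)); θ̄_{j,n+1} = θ̄_{j,n} for j ≠ j_n; θ̄_{n+1} = θ̄_n + θ̄_{j_n,n+1} − θ̄_{j_n,n}; and θ_{n+1} = P_C(θ̄_{n+1}).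 If there exists P ∈ ℕ such that for every n ∈ ℕ, {j_n, j_{n+1}, …, j_{n+P−1}} = {1,…,J}, then the sequence (θ_n)_{n∈ℕ} converges to a solution of the variational inequality problem. -/
open scoped RealInnerProductSpace
open Filter
set_option maxHeartbeats 1000000


lemma bfb_sq_le {a b : ℝ} (ha : 0 ≤ a) (hb : 0 ≤ b) (h : a ^ 2 ≤ b ^ 2) : a ≤ b := by
  nlinarith

lemma bfb_jensen_sq {ι E : Type*} [NormedAddCommGroup E] [InnerProductSpace ℝ E]
    (S : Finset ι) (w : ι → ℝ) (hw : ∀ i ∈ S, 0 ≤ w i) (h1 : ∑ i ∈ S, w i = 1)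
    (v : ι → E) : ‖∑ i ∈ S, w i • v i‖ ^ 2 ≤ ∑ i ∈ S, w i * ‖v i‖ ^ 2 := by
  have h2 : ‖∑ i ∈ S, w i • v i‖ ≤ ∑ i ∈ S, w i * ‖v i‖ := by
    refine (norm_sum_le _ _).trans ?_
    refine Finset.sum_le_sum fun i hi => ?_
    rw [norm_smul, Real.norm_eq_abs, abs_of_nonneg (hw i hi)]
  have h3 : (∑ i ∈ S, w i * ‖v i‖) ^ 2 ≤ ∑ i ∈ S, w i * ‖v i‖ ^ 2 := by
    have hcs := Finset.sum_mul_sq_le_sq_mul_sq S (fun i => Real.sqrt (w i))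
      (fun i => Real.sqrt (w i) * ‖v i‖)
    have e1 : ∀ i ∈ S, Real.sqrt (w i) * (Real.sqrt (w i) * ‖v i‖) = w i * ‖v i‖ := by
      intro i hi; rw [← mul_assoc, Real.mul_self_sqrt (hw i hi)]
    have e2 : ∀ i ∈ S, Real.sqrt (w i) ^ 2 = w i := fun i hi => Real.sq_sqrt (hw i hi)
    have e3 : ∀ i ∈ S, (Real.sqrt (w i) * ‖v i‖) ^ 2 = w i * ‖v i‖ ^ 2 := by
      intro i hi; rw [mul_pow, Real.sq_sqrt (hw i hi)]
    rw [Finset.sum_congr rfl e1, Finset.sum_congr rfl e2, Finset.sum_congr rfl e3, h1,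
      one_mul] at hcs
    exact hcs
  calc ‖∑ i ∈ S, w i • v i‖ ^ 2 ≤ (∑ i ∈ S, w i * ‖v i‖) ^ 2 := by
        have hnn : (0:ℝ) ≤ ‖∑ i ∈ S, w i • v i‖ := norm_nonneg _
        nlinarith
    _ ≤ _ := h3

lemma bfb_variance {ι E : Type*} [NormedAddCommGroup E] [InnerProductSpace ℝ E]
    (S : Finset ι) (w : ι → ℝ) (h1 : ∑ i ∈ S, w i = 1) (v : ι → E) :
    ∑ i ∈ S, w i * ‖v i - ∑ k ∈ S, w k • v k‖ ^ 2
      = ∑ i ∈ S, w i * ‖v i‖ ^ 2 - ‖∑ k ∈ S, w k • v k‖ ^ 2 := by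
  set m := ∑ k ∈ S, w k • v k with hm
  have hinner : ∑ i ∈ S, w i * ⟪v i, m⟫ = ‖m‖ ^ 2 := by
    rw [← real_inner_self_eq_norm_sq, hm, sum_inner]
    exact Finset.sum_congr rfl fun i _ => (real_inner_smul_left _ _ _).symm
  have hterm : ∀ i ∈ S, w i * ‖v i - m‖ ^ 2
      = w i * ‖v i‖ ^ 2 - 2 * (w i * ⟪v i, m⟫) + w i * ‖m‖ ^ 2 := by
    intro i _; rw [norm_sub_sq_real]; ring
  rw [Finset.sum_congr rfl hterm, Finset.sum_add_distrib, Finset.sum_sub_distrib,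
    ← Finset.mul_sum, ← Finset.sum_mul, h1, hinner]
  ring

lemma bfb_aux_seq {ι : Type*} [Fintype ι] [Nonempty ι] {Q : ℕ} (hQ : 1 ≤ Q)
    (lam : ι → ℝ) (hlam : ∀ j, 0 < lam j) (hlam1 : ∑ j, lam j = 1)
    (d s : ℕ → ℝ) (hd : ∀ n, 0 ≤ d n) (hs : ∀ n, 0 ≤ s n)
    (a : ℕ → ι → ℕ) (ha1 : ∀ n, Q ≤ n → ∀ i, n - Q ≤ a n i)
    (ha2 : ∀ n, Q ≤ n → ∀ i, a n i < n)
    (jsp : ℕ → ι) (hjsp : ∀ n, Q ≤ n → a n (jsp n) = n - 1)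
    (hrec : ∀ n, Q ≤ n → d n + s n ≤ ∑ i, lam i * d (a n i)) :
    ∃ ℓ, 0 ≤ ℓ ∧ Tendsto d atTop (nhds ℓ) ∧ Tendsto s atTop (nhds 0) := by
  classical
  have hrange : (Finset.range Q).Nonempty := by
    rw [Finset.nonempty_range_iff]; omega
  set W : ℕ → ℝ := fun n => (Finset.range Q).sup' hrange fun p => d (n + p) with hWdef
  have hdW : ∀ n p, p < Q → d (n + p) ≤ W n := fun n p hp =>
    Finset.le_sup' (fun p => d (n + p)) (Finset.mem_range.mpr hp)
  have hdW0 : ∀ n, d n ≤ W n := fun n => by simpa using hdW n 0 hQ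
  have hW0 : ∀ n, 0 ≤ W n := fun n => (hd n).trans (hdW0 n)
  have hwin : ∀ n m, Q ≤ n → n - Q ≤ m → m < n → d m ≤ W (n - Q) := by
    intro n m hn hm1 hm2
    have hme : m = (n - Q) + (m - (n - Q)) := by omega
    have hp : m - (n - Q) < Q := by omega
    rw [hme]; exact hdW _ _ hp
  have hmax : ∀ n, Q ≤ n → ∀ i, d (a n i) ≤ W (n - Q) := fun n hn i =>
    hwin n (a n i) hn (ha1 n hn i) (ha2 n hn i)
  have hlamle1 : ∀ i : ι, lam i ≤ 1 := by
    intro i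
    rw [← hlam1]
    exact Finset.single_le_sum (fun k _ => (hlam k).le) (Finset.mem_univ i)
  have hsum_le : ∀ n, Q ≤ n → ∑ i, lam i * d (a n i) ≤ W (n - Q) := by
    intro n hn
    calc ∑ i, lam i * d (a n i) ≤ ∑ i, lam i * W (n - Q) :=
          Finset.sum_le_sum fun i _ =>
            mul_le_mul_of_nonneg_left (hmax n hn i) (hlam i).le
      _ = W (n - Q) := by rw [← Finset.sum_mul, hlam1, one_mul]
  have hstep : ∀ n, Q ≤ n → d n ≤ W (n - Q) := by
    intro n hn
    have h1 := hrec n hn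
    have h2 := hs n
    linarith [hsum_le n hn]
  have hWanti : Antitone W := by
    apply antitone_nat_of_succ_le
    intro n
    apply Finset.sup'_le
    intro p hp
    rw [Finset.mem_range] at hp
    rcases lt_or_eq_of_le (Nat.succ_le_of_lt hp) with h | h
    · have : n + 1 + p = n + (p + 1) := by omega
      rw [this]; exact hdW n (p + 1) h
    · have : n + 1 + p = n + Q := by omega
      rw [this]
      have := hstep (n + Q) (by omega)
      simpa using this
  have bdd : BddBelow (Set.range W) := ⟨0, by rintro _ ⟨n, rfl⟩; exact hW0 n⟩
  have hWl : Tendsto W atTop (nhds (⨅ n, W n)) := tendsto_atTop_ciInf hWanti bdd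
  set ℓ := ⨅ n, W n with hldef
  have hlW : ∀ n, ℓ ≤ W n := fun n => ciInf_le bdd n
  have hl0 : 0 ≤ ℓ := le_ciInf hW0
  -- minimum weight
  have huniv : (Finset.univ : Finset ι).Nonempty := Finset.univ_nonempty
  set ρ := Finset.univ.inf' huniv lam with hρdef
  have hρpos : 0 < ρ := by
    rw [hρdef, Finset.lt_inf'_iff]
    exact fun i _ => hlam i
  have hρle : ∀ i, ρ ≤ lam i := fun i => Finset.inf'_le _ (Finset.mem_univ i)
  have hρ1 : ρ ≤ 1 := by
    obtain ⟨i⟩ := (inferInstance : Nonempty ι)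
    exact (hρle i).trans (hlamle1 i)
  -- lower bound claim
  have hlow : ∀ β : ℝ, 0 < β → ∀ᶠ n in atTop, ℓ - β ≤ d n := by
    intro β hβ
    set ε := ρ ^ Q * β / 2 with hεdef
    have hεpos : 0 < ε := by positivity
    obtain ⟨N, hN⟩ : ∃ N, ∀ n, N ≤ n → W n ≤ ℓ + ε := by
      have := hWl.eventually (gt_mem_nhds (by linarith : ℓ < ℓ + ε))
      rw [eventually_atTop] at this
      obtain ⟨N, hN⟩ := this
      exact ⟨N, fun n hn => (hN n hn).le⟩
    rw [eventually_atTop]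
    refine ⟨N + Q, fun m hm => ?_⟩
    by_contra hcon
    push_neg at hcon
    have hind : ∀ t, t ≤ Q → d (m + t) ≤ ℓ + ε - ρ ^ t * (β + ε) := by
      intro t
      induction t with
      | zero => intro _; simp only [pow_zero, one_mul, Nat.add_zero]; linarith
      | succ t ih =>
        intro htQ
        have ht' : t ≤ Q := by omega
        have hQm : Q ≤ m + t + 1 := by omega
        have hr := hrec (m + t + 1) hQm
        set i0 := jsp (m + t + 1) with hi0
        have hsp : a (m + t + 1) i0 = m + t := by rw [hjsp _ hQm]; omega
        have hbo : ∀ i, d (a (m + t + 1) i) ≤ ℓ + ε := by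
          intro i
          have h1 : N ≤ a (m + t + 1) i := by
            have := ha1 (m + t + 1) hQm i; omega
          exact (hdW0 _).trans ((hWanti h1).trans (hN N le_rfl))
        have hspd : d (a (m + t + 1) i0) ≤ ℓ + ε - ρ ^ t * (β + ε) := by
          rw [hsp]; exact ih ht'
        have hsplit : ∑ i, lam i * d (a (m + t + 1) i)
            ≤ (ℓ + ε) - lam i0 * (ρ ^ t * (β + ε)) := by
          rw [← Finset.add_sum_erase _ _ (Finset.mem_univ i0)]
          have hb1 : lam i0 * d (a (m + t + 1) i0)
              ≤ lam i0 * (ℓ + ε - ρ ^ t * (β + ε)) :=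
            mul_le_mul_of_nonneg_left hspd (hlam i0).le
          have hb2 : ∑ i ∈ Finset.univ.erase i0, lam i * d (a (m + t + 1) i)
              ≤ ∑ i ∈ Finset.univ.erase i0, lam i * (ℓ + ε) :=
            Finset.sum_le_sum fun i _ =>
              mul_le_mul_of_nonneg_left (hbo i) (hlam i).le
          have hb3 : ∑ i ∈ Finset.univ.erase i0, lam i = 1 - lam i0 := by
            have := Finset.add_sum_erase Finset.univ lam (Finset.mem_univ i0)
            rw [hlam1] at this; linarith
          rw [← Finset.sum_mul] at hb2
          rw [hb3] at hb2
          nlinarith [hlam i0, hlamle1 i0]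
        have hpow : ρ * (ρ ^ t * (β + ε)) ≤ lam i0 * (ρ ^ t * (β + ε)) :=
          mul_le_mul_of_nonneg_right (hρle i0)
            (by positivity)
        have : d (m + (t + 1)) = d (m + t + 1) := by ring_nf
        rw [this]
        have hsn := hs (m + t + 1)
        calc d (m + t + 1) ≤ (ℓ + ε) - lam i0 * (ρ ^ t * (β + ε)) := by linarith
          _ ≤ (ℓ + ε) - ρ ^ (t + 1) * (β + ε) := by
              rw [pow_succ]; nlinarith
    have hWm : W (m + 1) ≤ ℓ + ε - ρ ^ Q * (β + ε) := by
      apply Finset.sup'_le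
      intro p hp
      rw [Finset.mem_range] at hp
      have h1 := hind (p + 1) (by omega)
      have hmono : ρ ^ Q ≤ ρ ^ (p + 1) :=
        pow_le_pow_of_le_one hρpos.le hρ1 (by omega)
      have he : m + 1 + p = m + (p + 1) := by omega
      rw [he]
      nlinarith
    have h2ε : ρ ^ Q * β = 2 * ε := by rw [hεdef]; ring
    have := hlW (m + 1)
    nlinarith [mul_pos (pow_pos hρpos Q) hεpos]
  have hdten : Tendsto d atTop (nhds ℓ) := by
    rw [Metric.tendsto_atTop]
    intro ε hε
    have h1 := hlow (ε / 2) (by linarith)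
    have h2 := hWl.eventually (gt_mem_nhds (by linarith : ℓ < ℓ + ε / 2))
    rw [eventually_atTop] at h1 h2
    obtain ⟨N1, hN1⟩ := h1
    obtain ⟨N2, hN2⟩ := h2
    refine ⟨max N1 N2, fun n hn => ?_⟩
    have e1 := hN1 n (le_trans (le_max_left _ _) hn)
    have e2 := hN2 n (le_trans (le_max_right _ _) hn)
    have e3 := hdW0 n
    rw [Real.dist_eq, abs_lt]
    constructor <;> [linarith; linarith]
  have hsten : Tendsto s atTop (nhds 0) := by
    have hg : Tendsto (fun n => W (n - Q) - d n) atTop (nhds 0) := by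
      have := (hWl.comp (tendsto_sub_atTop_nat Q)).sub hdten
      simpa using this
    apply squeeze_zero' (Eventually.of_forall hs) _ hg
    rw [eventually_atTop]
    refine ⟨Q, fun n hn => ?_⟩
    have h1 := hrec n hn
    linarith [hsum_le n hn, hd n]
  exact ⟨ℓ, hl0, hdten, hsten⟩

lemma bfb_norm_of_sq {E : Type*} [NormedAddCommGroup E] (f : ℕ → E) (l : ℝ)
    (h : Tendsto (fun n => ‖f n‖ ^ 2) atTop (nhds l)) :
    Tendsto (fun n => ‖f n‖) atTop (nhds (Real.sqrt l)) := by
  have h1 := (Real.continuous_sqrt.tendsto l).comp h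
  have h2 : (fun n => Real.sqrt (‖f n‖ ^ 2)) = fun n => ‖f n‖ :=
    funext fun n => Real.sqrt_sq (norm_nonneg _)
  rwa [Function.comp_def, h2] at h1

lemma bfb_tendsto_of_norm_sq {E : Type*} [NormedAddCommGroup E] (f : ℕ → E) (c : E)
    (h : Tendsto (fun n => ‖f n - c‖ ^ 2) atTop (nhds 0)) : Tendsto f atTop (nhds c) := by
  have h1 := bfb_norm_of_sq (fun n => f n - c) 0 h
  rw [Real.sqrt_zero] at h1
  exact tendsto_iff_norm_sub_tendsto_zero.mpr h1

lemma bfb_cancel_const_mul (c : ℝ) (hc : 0 < c) (f : ℕ → ℝ)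
    (h : Tendsto (fun n => c * f n) atTop (nhds 0)) : Tendsto f atTop (nhds 0) := by
  have h1 := h.const_mul c⁻¹
  have h2 : (fun n => c⁻¹ * (c * f n)) = f := by
    funext n; rw [← mul_assoc, inv_mul_cancel₀ hc.ne', one_mul]
  rw [h2] at h1
  simpa using h1


/-- convergence of the batch forward-backward algorithm (Algorithm 2)
to a solution of the variational inequality. -/
theorem batch_forward_backward_converges
    {Θ G : Type*} [NormedAddCommGroup Θ] [InnerProductSpace ℝ Θ] [FiniteDimensional ℝ Θ]
    [NormedAddCommGroup G] [InnerProductSpace ℝ G] [FiniteDimensional ℝ G]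
    (K : ℕ) (hK : 0 < K)
    {C : Set Θ} (hCne : C.Nonempty) (hCcl : IsClosed C) (hCcv : Convex ℝ C)
    (L : Fin K → Θ →L[ℝ] G) (hL : ∃ k, L k ≠ 0) (y : Fin K → G)
    (ω : Fin K → ℝ) (hω : ∀ k, ω k ∈ Set.Ioc (0 : ℝ) 1) (hωsum : ∑ k, ω k = 1)
    (R : G → G) (hR : ∀ z₁ z₂ : G, ‖R z₁ - R z₂‖ ^ 2 ≤ ⟪z₁ - z₂, R z₁ - R z₂⟫)
    (hsol : ∃ θ ∈ C, ∀ ϑ ∈ C,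
      0 ≤ ⟪ϑ - θ, ∑ k, ω k • ContinuousLinearMap.adjoint (L k) (R (L k θ) - y k)⟫)
    -- (𝕂_j)_{1 ≤ j ≤ J} is a partition of {1,…,K} into nonempty sets
    (J : ℕ) (hJ : 0 < J)
    (𝕂 : Fin J → Finset (Fin K)) (h𝕂ne : ∀ j, (𝕂 j).Nonempty)
    (h𝕂disj : ∀ j₁ j₂ : Fin J, j₁ ≠ j₂ → Disjoint (𝕂 j₁) (𝕂 j₂))
    (h𝕂cover : (Finset.univ : Finset (Fin J)).biUnion 𝕂 = (Finset.univ : Finset (Fin K)))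
    (γ : ℝ) (hγ0 : 0 < γ)
    (hγ : γ < 2 / Finset.univ.sup' (Finset.univ_nonempty_iff.mpr ⟨⟨0, hK⟩⟩)
      (fun k => ‖L k‖ ^ 2))
    -- P is the metric projection onto C
    (P : Θ → Θ) (hP : ∀ x : Θ, P x ∈ C ∧ ∀ c ∈ C, ‖x - P x‖ ≤ ‖x - c‖)
    -- batch index selected at each iteration
    (j : ℕ → Fin J)
    -- the iterates of Algorithm 2
    (θ : ℕ → Θ) (θbar : ℕ → Fin J → Θ) (θtot : ℕ → Θ)
    (hinit : θtot 0 = ∑ i, θbar 0 i)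
    (hupd : ∀ n : ℕ, θbar (n + 1) (j n) = ∑ k ∈ 𝕂 (j n),
      ω k • (θ n - γ • ContinuousLinearMap.adjoint (L k) (R (L k (θ n)) - y k)))
    (hkeep : ∀ n : ℕ, ∀ i : Fin J, i ≠ j n → θbar (n + 1) i = θbar n i)
    (htot : ∀ n : ℕ, θtot (n + 1) = θtot n + θbar (n + 1) (j n) - θbar n (j n))
    (hproj : ∀ n : ℕ, θ (n + 1) = P (θtot (n + 1)))
    -- every batch index is selected at least once within any P consecutive iterations
    (hsweep : ∃ Q : ℕ, ∀ n : ℕ,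
      (Finset.range Q).image (fun p => j (n + p)) = (Finset.univ : Finset (Fin J))) :
    ∃ θstar : Θ,
      (θstar ∈ C ∧ ∀ ϑ ∈ C,
        0 ≤ ⟪ϑ - θstar,
              ∑ k, ω k • ContinuousLinearMap.adjoint (L k) (R (L k θstar) - y k)⟫) ∧
      Tendsto θ atTop (nhds θstar) := by
  classical
  set M := Finset.univ.sup' (Finset.univ_nonempty_iff.mpr ⟨⟨0, hK⟩⟩)
      (fun k => ‖L k‖ ^ 2) with hMdef
  have hMle : ∀ k, ‖L k‖ ^ 2 ≤ M := fun k =>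
    Finset.le_sup' (fun k => ‖L k‖ ^ 2) (Finset.mem_univ k)
  have hMpos : 0 < M := by
    obtain ⟨k₀, hk₀⟩ := hL
    have : 0 < ‖L k₀‖ := norm_pos_iff.mpr hk₀
    exact lt_of_lt_of_le (by positivity) (hMle k₀)
  set δ := 2 * γ / M - γ ^ 2 with hδdef
  have hδpos : 0 < δ := by
    rw [hδdef, sub_pos, lt_div_iff₀ hMpos]
    rw [lt_div_iff₀ hMpos] at hγ
    nlinarith
  -- the operators
  set Gm : Fin K → Θ → Θ :=
    fun k x => ContinuousLinearMap.adjoint (L k) (R (L k x) - y k) with hGmdef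
  have hRlip : ∀ z₁ z₂ : G, ‖R z₁ - R z₂‖ ≤ ‖z₁ - z₂‖ := by
    intro z₁ z₂
    have h1 := hR z₁ z₂
    have h2 := real_inner_le_norm (z₁ - z₂) (R z₁ - R z₂)
    nlinarith [norm_nonneg (R z₁ - R z₂), norm_nonneg (z₁ - z₂)]
  have hGmkey : ∀ k (x₁ x₂ : Θ), ‖Gm k x₁ - Gm k x₂‖ ^ 2
      ≤ M * ⟪x₁ - x₂, Gm k x₁ - Gm k x₂⟫ := by
    intro k x₁ x₂
    set v := R (L k x₁) - R (L k x₂) with hv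
    have h1 : Gm k x₁ - Gm k x₂ = ContinuousLinearMap.adjoint (L k) v := by
      rw [hGmdef, hv]; simp only [← map_sub]; congr 1; abel
    have h2 : ⟪x₁ - x₂, Gm k x₁ - Gm k x₂⟫ = ⟪L k x₁ - L k x₂, v⟫ := by
      rw [h1, ContinuousLinearMap.adjoint_inner_right, map_sub]
    have h3 : ‖v‖ ^ 2 ≤ ⟪L k x₁ - L k x₂, v⟫ := by rw [hv]; exact hR _ _
    have h4 : ‖Gm k x₁ - Gm k x₂‖ ≤ ‖L k‖ * ‖v‖ := by
      rw [h1]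
      calc ‖ContinuousLinearMap.adjoint (L k) v‖
          ≤ ‖ContinuousLinearMap.adjoint (L k)‖ * ‖v‖ :=
            ContinuousLinearMap.le_opNorm _ _
        _ = ‖L k‖ * ‖v‖ := by rw [ContinuousLinearMap.adjoint.norm_map]
    rw [h2]
    have h5 : ‖Gm k x₁ - Gm k x₂‖ ^ 2 ≤ ‖L k‖ ^ 2 * ‖v‖ ^ 2 := by
      nlinarith [norm_nonneg (Gm k x₁ - Gm k x₂), norm_nonneg v,
        norm_nonneg (L k)]
    nlinarith [hMle k, sq_nonneg ‖v‖, norm_nonneg v]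
  set Fm : Fin K → Θ → Θ := fun k x => x - γ • Gm k x with hFmdef
  have hFmkey : ∀ k (x₁ x₂ : Θ), ‖Fm k x₁ - Fm k x₂‖ ^ 2
      + δ * ‖Gm k x₁ - Gm k x₂‖ ^ 2 ≤ ‖x₁ - x₂‖ ^ 2 := by
    intro k x₁ x₂
    have h0 : Fm k x₁ - Fm k x₂ = (x₁ - x₂) - γ • (Gm k x₁ - Gm k x₂) := by
      rw [hFmdef]; simp only [smul_sub]; abel
    rw [h0, norm_sub_sq_real, real_inner_smul_right, norm_smul, Real.norm_eq_abs,
      abs_of_nonneg hγ0.le, mul_pow]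
    have hA := hGmkey k x₁ x₂
    have h6 : (2 * γ / M) * ‖Gm k x₁ - Gm k x₂‖ ^ 2
        ≤ 2 * γ * ⟪x₁ - x₂, Gm k x₁ - Gm k x₂⟫ := by
      have hnn : (0:ℝ) ≤ 2 * γ / M := by positivity
      calc (2 * γ / M) * ‖Gm k x₁ - Gm k x₂‖ ^ 2
          ≤ (2 * γ / M) * (M * ⟪x₁ - x₂, Gm k x₁ - Gm k x₂⟫) :=
            mul_le_mul_of_nonneg_left hA hnn
        _ = 2 * γ * ⟪x₁ - x₂, Gm k x₁ - Gm k x₂⟫ := by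
            field_simp
    rw [hδdef]
    nlinarith
  -- projection facts
  have hPmem : ∀ x, P x ∈ C := fun x => (hP x).1
  have hPchar : ∀ x, ∀ c ∈ C, ⟪x - P x, c - P x⟫ ≤ 0 := by
    intro x
    haveI : Nonempty C := ⟨⟨P x, hPmem x⟩⟩
    have hinf : ‖x - P x‖ = ⨅ w : C, ‖x - w‖ := by
      refine le_antisymm (le_ciInf fun w => (hP x).2 w w.2) ?_
      exact ciInf_le ⟨0, by rintro _ ⟨w, rfl⟩; exact norm_nonneg _⟩ (⟨P x, hPmem x⟩ : C)
    exact (norm_eq_iInf_iff_real_inner_le_zero hCcv (hPmem x)).mp hinf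
  have hPuniq : ∀ x p, p ∈ C → (∀ c ∈ C, ⟪x - p, c - p⟫ ≤ 0) → p = P x := by
    intro x p hp hchar
    have h1 := hPchar x p hp
    have h2 := hchar (P x) (hPmem x)
    have h3 : ‖p - P x‖ ^ 2 ≤ 0 := by
      have e : ‖p - P x‖ ^ 2 = ⟪p - P x, p - P x⟫ := (real_inner_self_eq_norm_sq _).symm
      have e2 : (⟪p - P x, p - P x⟫:ℝ) = ⟪x - P x, p - P x⟫ - ⟪x - p, p - P x⟫ := by
        rw [← inner_sub_left]; congr 1; abel
      have e3 : (⟪x - p, p - P x⟫:ℝ) = - ⟪x - p, P x - p⟫ := by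
        rw [← inner_neg_right]; congr 1; abel
      rw [e, e2, e3]
      linarith
    have h4 : ‖p - P x‖ = 0 := by
      have h5 := norm_nonneg (p - P x)
      nlinarith
    rw [norm_eq_zero, sub_eq_zero] at h4
    exact h4
  have hPfirm : ∀ x₁ x₂, ‖P x₁ - P x₂‖ ^ 2 ≤ ⟪x₁ - x₂, P x₁ - P x₂⟫ := by
    intro x₁ x₂
    have h1 := hPchar x₁ (P x₂) (hPmem x₂)
    have h2 := hPchar x₂ (P x₁) (hPmem x₁)
    have h1' : (⟪x₁ - P x₁, P x₁ - P x₂⟫:ℝ) = - ⟪x₁ - P x₁, P x₂ - P x₁⟫ := by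
      rw [← inner_neg_right]; congr 1; abel
    have e : (⟪x₁ - x₂, P x₁ - P x₂⟫:ℝ) - ⟪P x₁ - P x₂, P x₁ - P x₂⟫
        = ⟪x₁ - P x₁, P x₁ - P x₂⟫ - ⟪x₂ - P x₂, P x₁ - P x₂⟫ := by
      rw [← inner_sub_left, ← inner_sub_left]; congr 1; abel
    have en : (⟪P x₁ - P x₂, P x₁ - P x₂⟫:ℝ) = ‖P x₁ - P x₂‖ ^ 2 :=
      real_inner_self_eq_norm_sq _
    linarith
  have hPcontr : ∀ x₁ x₂, ‖P x₁ - P x₂‖ ^ 2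
      + ‖(x₁ - P x₁) - (x₂ - P x₂)‖ ^ 2 ≤ ‖x₁ - x₂‖ ^ 2 := by
    intro x₁ x₂
    have e : (x₁ - P x₁) - (x₂ - P x₂) = (x₁ - x₂) - (P x₁ - P x₂) := by abel
    rw [e, norm_sub_sq_real (x₁ - x₂) (P x₁ - P x₂)]
    linarith [hPfirm x₁ x₂]
  have hPlip : ∀ x₁ x₂, ‖P x₁ - P x₂‖ ≤ ‖x₁ - x₂‖ := by
    intro x₁ x₂
    nlinarith [hPcontr x₁ x₂, sq_nonneg ‖(x₁ - P x₁) - (x₂ - P x₂)‖,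
      norm_nonneg (P x₁ - P x₂), norm_nonneg (x₁ - x₂)]
  have hPcont : Continuous P := by
    have hl : LipschitzWith 1 P := LipschitzWith.of_dist_le_mul fun a b => by
      rw [dist_eq_norm, dist_eq_norm]; simpa using hPlip a b
    exact hl.continuous
  -- the full operator and fixed points
  set Bv : Θ → Θ := fun x => ∑ k, ω k • Gm k x with hBvdef
  have hfix_of_sol : ∀ θ' ∈ C, (∀ ϑ ∈ C, 0 ≤ ⟪ϑ - θ', Bv θ'⟫) →
      P (θ' - γ • Bv θ') = θ' := by
    intro θ' hθ' hvi
    refine (hPuniq _ _ hθ' ?_).symm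
    intro c hc
    have e : (θ' - γ • Bv θ') - θ' = -(γ • Bv θ') := by abel
    rw [e, inner_neg_left, real_inner_smul_left, real_inner_comm]
    have := hvi c hc
    nlinarith
  have hsol_of_fix : ∀ θ' : Θ, P (θ' - γ • Bv θ') = θ' →
      θ' ∈ C ∧ ∀ ϑ ∈ C, 0 ≤ ⟪ϑ - θ', Bv θ'⟫ := by
    intro θ' hfp
    have hmem : θ' ∈ C := hfp ▸ hPmem _
    refine ⟨hmem, fun c hc => ?_⟩
    have h1 := hPchar (θ' - γ • Bv θ') c hc
    rw [hfp] at h1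
    have e : (θ' - γ • Bv θ') - θ' = -(γ • Bv θ') := by abel
    rw [e, inner_neg_left, real_inner_smul_left, real_inner_comm] at h1
    nlinarith

  obtain ⟨Q, hQ⟩ := hsweep
  have hQ1 : 1 ≤ Q := by
    by_contra hc
    push_neg at hc
    interval_cases Q
    have h1 := hQ 0
    have h2 : (⟨0, hJ⟩ : Fin J) ∈ (Finset.univ : Finset (Fin J)) := Finset.mem_univ _
    rw [← h1] at h2
    simp at h2
  -- block assignment
  have hBex : ∀ k : Fin K, ∃ jj : Fin J, k ∈ 𝕂 jj := by
    intro k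
    have h1 : k ∈ (Finset.univ : Finset (Fin K)) := Finset.mem_univ k
    rw [← h𝕂cover] at h1
    obtain ⟨jj, _, hjj⟩ := Finset.mem_biUnion.mp h1
    exact ⟨jj, hjj⟩
  choose blk hblk using hBex
  have hblk_eq : ∀ (jj : Fin J) (k : Fin K), k ∈ 𝕂 jj → blk k = jj := by
    intro jj k hk
    by_contra hne
    exact Finset.disjoint_left.mp (h𝕂disj _ _ hne) (hblk k) hk
  have hpartΘ : ∀ f : Fin K → Θ, ∑ jj, ∑ k ∈ 𝕂 jj, f k = ∑ k, f k := by
    intro f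
    rw [← h𝕂cover]
    exact (Finset.sum_biUnion fun j₁ _ j₂ _ hne => h𝕂disj j₁ j₂ hne).symm
  have hpartR : ∀ f : Fin K → ℝ, ∑ jj, ∑ k ∈ 𝕂 jj, f k = ∑ k, f k := by
    intro f
    rw [← h𝕂cover]
    exact (Finset.sum_biUnion fun j₁ _ j₂ _ hne => h𝕂disj j₁ j₂ hne).symm
  -- last update times
  set A : ℕ → Fin J → ℕ := fun n jj => Nat.findGreatest (fun m => j m = jj) (n - 1)
    with hAdef
  have hAex : ∀ n, Q ≤ n → ∀ jj, ∃ m, n - Q ≤ m ∧ m ≤ n - 1 ∧ j m = jj := by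
    intro n hn jj
    have h1 := hQ (n - Q)
    have h2 : jj ∈ (Finset.range Q).image (fun p => j (n - Q + p)) := by
      rw [h1]; exact Finset.mem_univ _
    obtain ⟨p, hp, hjp⟩ := Finset.mem_image.mp h2
    rw [Finset.mem_range] at hp
    exact ⟨n - Q + p, by omega, by omega, hjp⟩
  have hAlb : ∀ n, Q ≤ n → ∀ jj, n - Q ≤ A n jj := by
    intro n hn jj
    obtain ⟨m, hm1, hm2, hm3⟩ := hAex n hn jj
    exact le_trans hm1 (Nat.le_findGreatest hm2 hm3)
  have hAub : ∀ n, 1 ≤ n → ∀ jj, A n jj < n := by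
    intro n hn jj
    have h1 : A n jj ≤ n - 1 := Nat.findGreatest_le (P := fun m => j m = jj) (n - 1)
    omega
  have hAspec : ∀ n : ℕ, A (n + 1) (j n) = n := by
    intro n
    have h1 : A (n + 1) (j n) ≤ n := Nat.findGreatest_le (P := fun m => j m = j n) n
    have h2 : n ≤ A (n + 1) (j n) := Nat.le_findGreatest le_rfl rfl
    omega
  have hAkeep : ∀ n : ℕ, ∀ jj, jj ≠ j n → (∃ m, m < n ∧ j m = jj) →
      A (n + 1) jj = A n jj := by
    intro n jj hne hex
    obtain ⟨m, hm, hjm⟩ := hex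
    have hn1 : 1 ≤ n := by omega
    have e : n - 1 + 1 = n := by omega
    have hnot : ¬ (fun m => j m = jj) (n - 1 + 1) := by
      simp only [e]
      exact fun hc => hne hc.symm
    have h2 := Nat.findGreatest_of_not (P := fun m => j m = jj) (n := n - 1) hnot
    show Nat.findGreatest (fun m => j m = jj) n = Nat.findGreatest (fun m => j m = jj) (n - 1)
    rw [← e]
    exact h2
  -- closed form for θbar
  have hbar : ∀ n : ℕ, ∀ jj, (∃ m, m < n ∧ j m = jj) →
      θbar n jj = ∑ k ∈ 𝕂 jj, ω k • Fm k (θ (A n jj)) := by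
    intro n
    induction n with
    | zero => rintro jj ⟨m, hm, _⟩; omega
    | succ n ih =>
      intro jj hex
      by_cases hcase : jj = j n
      · subst hcase
        rw [hupd n, hAspec n]
      · obtain ⟨m, hm, hjm⟩ := hex
        have hm' : m < n := by
          rcases Nat.lt_succ_iff_lt_or_eq.mp hm with h | h
          · exact h
          · exact absurd (h ▸ hjm).symm hcase
        rw [hkeep n jj hcase, ih jj ⟨m, hm', hjm⟩, hAkeep n jj hcase ⟨m, hm', hjm⟩]
  have htotsum : ∀ n, θtot n = ∑ i, θbar n i := by
    intro n
    induction n with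
    | zero => exact hinit
    | succ n ih =>
      rw [htot n, ih]
      have h1 : ∑ i, θbar (n+1) i
          = θbar (n+1) (j n) + ∑ i ∈ Finset.univ.erase (j n), θbar (n+1) i :=
        (Finset.add_sum_erase _ _ (Finset.mem_univ _)).symm
      have h2 : ∑ i, θbar n i
          = θbar n (j n) + ∑ i ∈ Finset.univ.erase (j n), θbar n i :=
        (Finset.add_sum_erase _ _ (Finset.mem_univ _)).symm
      have h3 : ∑ i ∈ Finset.univ.erase (j n), θbar (n+1) i
          = ∑ i ∈ Finset.univ.erase (j n), θbar n i :=
        Finset.sum_congr rfl fun i hi => hkeep n i (Finset.ne_of_mem_erase hi)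
      rw [h1, h3, h2]
      abel
  have hθP : ∀ n, 1 ≤ n → θ n = P (θtot n) := by
    intro n hn
    have e : n = (n - 1) + 1 := by omega
    rw [e, hproj]
  have hθC : ∀ n, 1 ≤ n → θ n ∈ C := by
    intro n hn
    rw [hθP n hn]
    exact hPmem _
  set AA : ℕ → Fin K → ℕ := fun n k => A n (blk k) with hAAdef
  have htotF : ∀ n, Q ≤ n → θtot n = ∑ k, ω k • Fm k (θ (AA n k)) := by
    intro n hn
    rw [htotsum n]
    have h1 : ∀ jj : Fin J, θbar n jj = ∑ k ∈ 𝕂 jj, ω k • Fm k (θ (AA n k)) := by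
      intro jj
      obtain ⟨m, hm1, hm2, hm3⟩ := hAex n hn jj
      rw [hbar n jj ⟨m, by omega, hm3⟩]
      refine Finset.sum_congr rfl fun k hk => ?_
      have : AA n k = A n jj := by show A n (blk k) = A n jj; rw [hblk_eq jj k hk]
      rw [this]
    rw [Finset.sum_congr rfl fun jj _ => h1 jj, hpartΘ]
  set kq : ℕ → Fin K := fun n => (h𝕂ne (j (n - 1))).choose with hkqdef
  have hkq : ∀ n, kq n ∈ 𝕂 (j (n - 1)) := fun n => (h𝕂ne (j (n - 1))).choose_spec
  have hAAsp : ∀ n, 1 ≤ n → AA n (kq n) = n - 1 := by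
    intro n hn
    show A n (blk (kq n)) = n - 1
    rw [hblk_eq _ _ (hkq n)]
    have e : n - 1 + 1 = n := by omega
    have h1 := hAspec (n - 1)
    rw [e] at h1
    exact h1
  have hAAlb : ∀ n, Q ≤ n → ∀ k, n - Q ≤ AA n k := fun n hn k => hAlb n hn (blk k)
  have hAAub : ∀ n, Q ≤ n → ∀ k, AA n k < n := fun n hn k => hAub n (by omega) (blk k)
  haveI : Nonempty (Fin K) := ⟨⟨0, hK⟩⟩
  -- algebraic identity for the averaged operator
  have hzEq : ∀ x : Θ, ∑ k, ω k • Fm k x = x - γ • Bv x := by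
    intro x
    have e1 : ∀ k : Fin K, ω k • Fm k x = ω k • x - γ • (ω k • Gm k x) := by
      intro k
      show ω k • (x - γ • Gm k x) = _
      rw [smul_sub, smul_comm]
    rw [Finset.sum_congr rfl fun k _ => e1 k, Finset.sum_sub_distrib, ← Finset.sum_smul,
      hωsum, one_smul, ← Finset.smul_sum]
  -- the key convergence estimate, valid for any solution
  have key : ∀ θ' : Θ, θ' ∈ C → (∀ ϑ ∈ C, 0 ≤ ⟪ϑ - θ', Bv θ'⟫) →
      ∃ ℓ, 0 ≤ ℓ ∧ Tendsto (fun n => ‖θ n - θ'‖ ^ 2) atTop (nhds ℓ) ∧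
        Tendsto (fun n => ‖(θtot n - θ n) - (-γ • Bv θ')‖ ^ 2
          + δ * ∑ k, ω k * ‖Gm k (θ (AA n k)) - Gm k θ'‖ ^ 2) atTop (nhds 0) := by
    intro θ' hθ'C hθ'VI
    have hfp : P (θ' - γ • Bv θ') = θ' := hfix_of_sol θ' hθ'C hθ'VI
    set z' := θ' - γ • Bv θ' with hz'def
    have hzF : z' = ∑ k, ω k • Fm k θ' := (hzEq θ').symm
    have hz'sub : z' - θ' = -(γ • Bv θ') := by rw [hz'def]; abel
    have hrec : ∀ n, Q ≤ n →
        ‖θ n - θ'‖ ^ 2 + (‖(θtot n - θ n) - (-γ • Bv θ')‖ ^ 2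
          + δ * ∑ k, ω k * ‖Gm k (θ (AA n k)) - Gm k θ'‖ ^ 2)
        ≤ ∑ k, ω k * ‖θ (AA n k) - θ'‖ ^ 2 := by
      intro n hn
      have hn1 : 1 ≤ n := by omega
      have hp1 : ‖θ n - θ'‖ ^ 2 + ‖(θtot n - θ n) - (-γ • Bv θ')‖ ^ 2
          ≤ ‖θtot n - z'‖ ^ 2 := by
        have h := hPcontr (θtot n) z'
        rw [hfp, ← hθP n hn1] at h
        have e2 : (θtot n - θ n) - (z' - θ') = (θtot n - θ n) - (-(γ • Bv θ')) := by
          rw [hz'sub]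
        rw [e2] at h
        have e3 : -(γ • Bv θ') = (-γ) • Bv θ' := by rw [neg_smul]
        rw [e3] at h
        exact h
      have hp2 : ‖θtot n - z'‖ ^ 2 ≤ ∑ k, ω k * ‖Fm k (θ (AA n k)) - Fm k θ'‖ ^ 2 := by
        have e : θtot n - z' = ∑ k, ω k • (Fm k (θ (AA n k)) - Fm k θ') := by
          rw [htotF n hn, hzF, ← Finset.sum_sub_distrib]
          exact Finset.sum_congr rfl fun k _ => (smul_sub _ _ _).symm
        rw [e]
        exact bfb_jensen_sq Finset.univ ω (fun k _ => (hω k).1.le) hωsum _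
      have hp3 : ∑ k, ω k * ‖Fm k (θ (AA n k)) - Fm k θ'‖ ^ 2
          ≤ ∑ k, ω k * ‖θ (AA n k) - θ'‖ ^ 2
            - δ * ∑ k, ω k * ‖Gm k (θ (AA n k)) - Gm k θ'‖ ^ 2 := by
        have h1 : ∀ k : Fin K, ω k * ‖Fm k (θ (AA n k)) - Fm k θ'‖ ^ 2
            ≤ ω k * ‖θ (AA n k) - θ'‖ ^ 2
              - δ * (ω k * ‖Gm k (θ (AA n k)) - Gm k θ'‖ ^ 2) := by
          intro k
          have h2 := hFmkey k (θ (AA n k)) θ'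
          nlinarith [mul_le_mul_of_nonneg_left h2 (hω k).1.le]
        calc ∑ k, ω k * ‖Fm k (θ (AA n k)) - Fm k θ'‖ ^ 2
            ≤ ∑ k, (ω k * ‖θ (AA n k) - θ'‖ ^ 2
              - δ * (ω k * ‖Gm k (θ (AA n k)) - Gm k θ'‖ ^ 2)) :=
              Finset.sum_le_sum fun k _ => h1 k
          _ = _ := by rw [Finset.sum_sub_distrib, ← Finset.mul_sum]
      linarith [hp1, hp2, hp3]
    exact bfb_aux_seq hQ1 ω (fun k => (hω k).1) hωsum
      (fun n => ‖θ n - θ'‖ ^ 2)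
      (fun n => ‖(θtot n - θ n) - (-γ • Bv θ')‖ ^ 2
        + δ * ∑ k, ω k * ‖Gm k (θ (AA n k)) - Gm k θ'‖ ^ 2)
      (fun n => sq_nonneg _)
      (fun n => add_nonneg (sq_nonneg _) (mul_nonneg hδpos.le
        (Finset.sum_nonneg fun k _ => mul_nonneg (hω k).1.le (sq_nonneg _))))
      AA hAAlb hAAub kq (fun n hn => hAAsp n (by omega)) hrec
  -- apply to the given solution
  obtain ⟨θs, hθsC, hθsVI⟩ := hsol
  obtain ⟨ℓs, hℓs0, hds, hss⟩ := key θs hθsC hθsVI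
  have hsnn : ∀ n, (0:ℝ) ≤ δ * ∑ k, ω k * ‖Gm k (θ (AA n k)) - Gm k θs‖ ^ 2 :=
    fun n => mul_nonneg hδpos.le
      (Finset.sum_nonneg fun k _ => mul_nonneg (hω k).1.le (sq_nonneg _))
  have hr0 : Tendsto (fun n => ‖(θtot n - θ n) - (-γ • Bv θs)‖ ^ 2) atTop (nhds 0) :=
    squeeze_zero (fun n => sq_nonneg _) (fun n => by linarith [hsnn n]) hss
  have htt : Tendsto (fun n => θtot n - θ n) atTop (nhds (-γ • Bv θs)) :=
    bfb_tendsto_of_norm_sq _ _ hr0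
  have hSig0 : Tendsto (fun n => ∑ k, ω k * ‖Gm k (θ (AA n k)) - Gm k θs‖ ^ 2)
      atTop (nhds 0) := by
    apply bfb_cancel_const_mul δ hδpos
    refine squeeze_zero (fun n => hsnn n) (fun n => ?_) hss
    have hq := sq_nonneg (‖(θtot n - θ n) - (-γ • Bv θs)‖)
    linarith
  have hg0 : ∀ k, Tendsto (fun n => Gm k (θ (AA n k))) atTop (nhds (Gm k θs)) := by
    intro k
    have h1 : Tendsto (fun n => ω k * ‖Gm k (θ (AA n k)) - Gm k θs‖ ^ 2) atTop (nhds 0) := by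
      refine squeeze_zero (fun n => mul_nonneg (hω k).1.le (sq_nonneg _)) (fun n => ?_) hSig0
      exact Finset.single_le_sum (f := fun k' => ω k' * ‖Gm k' (θ (AA n k')) - Gm k' θs‖ ^ 2)
        (fun k' _ => mul_nonneg (hω k').1.le (sq_nonneg _)) (Finset.mem_univ k)
    exact bfb_tendsto_of_norm_sq _ _ (bfb_cancel_const_mul (ω k) (hω k).1 _ h1)
  have hGsum : Tendsto (fun n => ∑ k, ω k • Gm k (θ (AA n k))) atTop (nhds (Bv θs)) := by
    have : Bv θs = ∑ k, ω k • Gm k θs := rfl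
    rw [this]
    exact tendsto_finset_sum _ fun k _ => (hg0 k).const_smul (ω k)
  set u : ℕ → Θ := fun n => ∑ k, ω k • θ (AA n k) with hudef
  have hmean : Tendsto (fun n => u n - θ n) atTop (nhds 0) := by
    have he : ∀ᶠ n in atTop, u n - θ n
        = (θtot n - θ n) + γ • ∑ k, ω k • Gm k (θ (AA n k)) := by
      filter_upwards [eventually_ge_atTop Q] with n hn
      have e1 : ∑ k, ω k • Fm k (θ (AA n k))
          = u n - γ • ∑ k, ω k • Gm k (θ (AA n k)) := by
        rw [hudef, Finset.smul_sum, ← Finset.sum_sub_distrib]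
        refine Finset.sum_congr rfl fun k _ => ?_
        show ω k • (θ (AA n k) - γ • Gm k (θ (AA n k))) = _
        rw [smul_sub, smul_comm]
      have e2 : θtot n = u n - γ • ∑ k, ω k • Gm k (θ (AA n k)) := by
        rw [htotF n hn, e1]
      rw [e2]; abel
    have h2 : Tendsto (fun n => (θtot n - θ n) + γ • ∑ k, ω k • Gm k (θ (AA n k)))
        atTop (nhds ((-γ • Bv θs) + γ • Bv θs)) := htt.add (hGsum.const_smul γ)
    have h3 : (-γ • Bv θs) + γ • Bv θs = 0 := by rw [neg_smul]; abel
    rw [h3] at h2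
    exact Filter.Tendsto.congr' (he.mono fun n hn => hn.symm) h2
  have hdA : ∀ k, Tendsto (fun n => ‖θ (AA n k) - θs‖ ^ 2) atTop (nhds ℓs) := by
    intro k
    have hAT : Tendsto (fun n => AA n k) atTop atTop := by
      apply tendsto_atTop_mono' atTop ?_ (tendsto_sub_atTop_nat Q)
      filter_upwards [eventually_ge_atTop Q] with n hn
      exact hAAlb n hn k
    exact hds.comp hAT
  have hubar2 : Tendsto (fun n => ‖u n - θs‖ ^ 2) atTop (nhds ℓs) := by
    have h1 : Tendsto (fun n => ‖θ n - θs‖) atTop (nhds (Real.sqrt ℓs)) :=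
      bfb_norm_of_sq _ _ hds
    have h0 : Tendsto (fun n => ‖u n - θ n‖) atTop (nhds 0) := by
      have := hmean.norm
      simpa using this
    have h2 : Tendsto (fun n => ‖u n - θs‖ - ‖θ n - θs‖) atTop (nhds 0) := by
      apply squeeze_zero_norm (fun n => ?_) h0
      calc |‖u n - θs‖ - ‖θ n - θs‖| ≤ ‖(u n - θs) - (θ n - θs)‖ :=
            abs_norm_sub_norm_le _ _
        _ = ‖u n - θ n‖ := by congr 1; abel
    have h4 : Tendsto (fun n => ‖u n - θs‖) atTop (nhds (Real.sqrt ℓs)) := by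
      have := h2.add h1
      simpa using this
    have h5 := h4.pow 2
    simpa [Real.sq_sqrt hℓs0] using h5
  have hvar0 : Tendsto (fun n => ∑ k, ω k * ‖θ (AA n k) - u n‖ ^ 2) atTop (nhds 0) := by
    have hid : ∀ n, ∑ k, ω k * ‖θ (AA n k) - u n‖ ^ 2
        = (∑ k, ω k * ‖θ (AA n k) - θs‖ ^ 2) - ‖u n - θs‖ ^ 2 := by
      intro n
      have hm : ∑ k, ω k • (θ (AA n k) - θs) = u n - θs := by
        have e1 : ∀ k : Fin K, ω k • (θ (AA n k) - θs)
            = ω k • θ (AA n k) - ω k • θs := fun k => smul_sub _ _ _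
        rw [Finset.sum_congr rfl fun k _ => e1 k, Finset.sum_sub_distrib,
          ← Finset.sum_smul, hωsum, one_smul]
      have hvv := bfb_variance Finset.univ ω hωsum (fun k => θ (AA n k) - θs)
      rw [hm] at hvv
      have e2 : ∀ k : Fin K, θ (AA n k) - θs - (u n - θs) = θ (AA n k) - u n :=
        fun k => by abel
      rw [Finset.sum_congr rfl fun k (_ : k ∈ Finset.univ) => by rw [e2 k]] at hvv
      exact hvv
    have h1 : Tendsto (fun n => (∑ k, ω k * ‖θ (AA n k) - θs‖ ^ 2) - ‖u n - θs‖ ^ 2)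
        atTop (nhds ((∑ k : Fin K, ω k * ℓs) - ℓs)) :=
      (tendsto_finset_sum _ fun k _ => (hdA k).const_mul (ω k)).sub hubar2
    have h2 : (∑ k : Fin K, ω k * ℓs) - ℓs = 0 := by
      rw [← Finset.sum_mul, hωsum, one_mul, sub_self]
    rw [h2] at h1
    exact h1.congr fun n => (hid n).symm
  have hAclose : ∀ k, Tendsto (fun n => θ (AA n k) - θ n) atTop (nhds 0) := by
    intro k
    have h1 : Tendsto (fun n => ω k * ‖θ (AA n k) - u n‖ ^ 2) atTop (nhds 0) := by
      refine squeeze_zero (fun n => mul_nonneg (hω k).1.le (sq_nonneg _)) (fun n => ?_) hvar0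
      exact Finset.single_le_sum (f := fun k' => ω k' * ‖θ (AA n k') - u n‖ ^ 2)
        (fun k' _ => mul_nonneg (hω k').1.le (sq_nonneg _)) (Finset.mem_univ k)
    have h2 : Tendsto (fun n => θ (AA n k) - u n) atTop (nhds 0) :=
      bfb_tendsto_of_norm_sq _ _ (by
        simpa [sub_zero] using bfb_cancel_const_mul (ω k) (hω k).1 _ h1)
    have h3 := h2.add hmean
    have e : ∀ n, (θ (AA n k) - u n) + (u n - θ n) = θ (AA n k) - θ n := fun n => by abel
    rw [show (0:Θ) = 0 + 0 from (add_zero 0).symm]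
    exact (h3.congr e)
  -- boundedness and a convergent subsequence
  have hbdd : ∃ Cb : ℝ, ∀ n, ‖θ n - θs‖ ≤ Cb := by
    have hev : ∀ᶠ n in atTop, ‖θ n - θs‖ ^ 2 ≤ ℓs + 1 :=
      hds.eventually (eventually_le_nhds (by linarith))
    obtain ⟨N, hN⟩ := eventually_atTop.mp hev
    refine ⟨Real.sqrt (ℓs + 1) + ∑ m ∈ Finset.range (N + 1), ‖θ m - θs‖, fun n => ?_⟩
    rcases le_or_gt N n with h | h
    · have h1 := hN n h
      have h2 : ‖θ n - θs‖ ≤ Real.sqrt (ℓs + 1) := by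
        rw [← Real.sqrt_sq (norm_nonneg (θ n - θs))]
        exact Real.sqrt_le_sqrt h1
      have h3 : (0:ℝ) ≤ ∑ m ∈ Finset.range (N + 1), ‖θ m - θs‖ :=
        Finset.sum_nonneg fun m _ => norm_nonneg _
      linarith
    · have h1 : ‖θ n - θs‖ ≤ ∑ m ∈ Finset.range (N + 1), ‖θ m - θs‖ :=
        Finset.single_le_sum (f := fun m => ‖θ m - θs‖)
          (fun m _ => norm_nonneg _) (Finset.mem_range.mpr (by omega))
      have h2 : (0:ℝ) ≤ Real.sqrt (ℓs + 1) := Real.sqrt_nonneg _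
      linarith
  obtain ⟨Cb, hCb⟩ := hbdd
  obtain ⟨θinf, -, φ, hφmono, hφtend⟩ :=
    tendsto_subseq_of_bounded (Metric.isBounded_closedBall (x := θs) (r := Cb))
      (fun n => Metric.mem_closedBall.mpr (by rw [dist_eq_norm]; exact hCb n))
  have hφat : Tendsto φ atTop atTop := hφmono.tendsto_atTop
  have hθAφ : ∀ k, Tendsto (fun i => θ (AA (φ i) k)) atTop (nhds θinf) := by
    intro k
    have h1 : Tendsto (fun i => θ (AA (φ i) k) - θ (φ i)) atTop (nhds 0) :=
      (hAclose k).comp hφat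
    have h2 := h1.add hφtend
    simpa using h2
  have hGcont : ∀ k, Continuous (Gm k) := by
    intro k
    have hRc : Continuous R := by
      have hl : LipschitzWith 1 R := LipschitzWith.of_dist_le_mul fun a b => by
        rw [dist_eq_norm, dist_eq_norm]; simpa using hRlip a b
      exact hl.continuous
    show Continuous fun x => ContinuousLinearMap.adjoint (L k) (R (L k x) - y k)
    exact (ContinuousLinearMap.adjoint (L k)).continuous.comp
      ((hRc.comp (L k).continuous).sub continuous_const)
  have htotφ : Tendsto (fun i => θtot (φ i)) atTop (nhds (θinf - γ • Bv θinf)) := by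
    have h1 : Tendsto (fun i => ∑ k, ω k • Fm k (θ (AA (φ i) k))) atTop
        (nhds (∑ k, ω k • Fm k θinf)) := by
      refine tendsto_finset_sum _ fun k _ => Tendsto.const_smul ?_ (ω k)
      have h2 : Tendsto (fun i => Gm k (θ (AA (φ i) k))) atTop (nhds (Gm k θinf)) :=
        ((hGcont k).tendsto _).comp (hθAφ k)
      exact (hθAφ k).sub (h2.const_smul γ)
    rw [hzEq θinf] at h1
    apply h1.congr'
    filter_upwards [hφat.eventually (eventually_ge_atTop Q)] with i hi
    exact (htotF (φ i) hi).symm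
  have hfpφ : Tendsto (fun i => θ (φ i)) atTop (nhds (P (θinf - γ • Bv θinf))) := by
    have h1 := (hPcont.tendsto _).comp htotφ
    apply h1.congr'
    filter_upwards [hφat.eventually (eventually_ge_atTop 1)] with i hi
    exact (hθP (φ i) hi).symm
  have hfpinf : P (θinf - γ • Bv θinf) = θinf := tendsto_nhds_unique hfpφ hφtend
  obtain ⟨hinfC, hinfVI⟩ := hsol_of_fix θinf hfpinf
  obtain ⟨ℓi, hℓi0, hdi, -⟩ := key θinf hinfC hinfVI
  have hℓi : ℓi = 0 := by
    have h1 : Tendsto (fun i => ‖θ (φ i) - θinf‖ ^ 2) atTop (nhds ℓi) := hdi.comp hφat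
    have h2 : Tendsto (fun i => ‖θ (φ i) - θinf‖ ^ 2) atTop (nhds 0) := by
      have h3 : Tendsto (fun i => θ (φ i) - θinf) atTop (nhds (θinf - θinf)) :=
        hφtend.sub tendsto_const_nhds
      rw [sub_self] at h3
      have h4 := (h3.norm).pow 2
      simpa using h4
    exact tendsto_nhds_unique h1 h2
  refine ⟨θinf, ⟨hinfC, hinfVI⟩, ?_⟩
  rw [hℓi] at hdi
  exact bfb_tendsto_of_norm_sq _ _ hdi
end

section
/- Let Θ and G be finite-dimensional real inner product spaces, let K be a positive integer, let C ⊆ Θ be a nonempty closed convex set, let L_1,…,L_K : Θ → G be continuous linear maps, let y_1,…,y_K ∈ G, let ω_1,…,ω_K ∈ (0,1] with ω_1+⋯+ω_K = 1, and let R : G → G be firmly nonexpansive. Suppose there exists θ* ∈ C such that R(L_k θ*) = y_k for every k ∈ {1,…,K}. Then a point θ ∈ C satisfies the variational inequality — for all ϑ ∈ C, ⟨ϑ − θ, Σ_{k=1}^K ω_k L_k*(R(L_k θ) − y_k)⟩ ≥ 0 — if and only if R(L_k θ) = y_k for every k ∈ {1,…,K}. -/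
open scoped RealInnerProductSpace

/-- if the exact problem R(L_k θ*) = y_k (k = 1,…,K) has a solution θ* ∈ C,
then θ ∈ C solves the variational inequality iff R(L_k θ) = y_k for every k. -/
theorem vi_exact_relaxation
    {Θ G : Type*} [NormedAddCommGroup Θ] [InnerProductSpace ℝ Θ] [FiniteDimensional ℝ Θ]
    [NormedAddCommGroup G] [InnerProductSpace ℝ G] [FiniteDimensional ℝ G]
    (K : ℕ) (hK : 0 < K)
    {C : Set Θ} (hCne : C.Nonempty) (hCcl : IsClosed C) (hCcv : Convex ℝ C)
    (L : Fin K → Θ →L[ℝ] G) (y : Fin K → G)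
    (ω : Fin K → ℝ) (hω : ∀ k, ω k ∈ Set.Ioc (0 : ℝ) 1) (hωsum : ∑ k, ω k = 1)
    (R : G → G) (hR : ∀ z₁ z₂ : G, ‖R z₁ - R z₂‖ ^ 2 ≤ ⟪z₁ - z₂, R z₁ - R z₂⟫)
    (θstar : Θ) (hθstar : θstar ∈ C ∧ ∀ k, R (L k θstar) = y k)
    (θ : Θ) (hθ : θ ∈ C) :
    (∀ ϑ ∈ C, 0 ≤ ⟪ϑ - θ, ∑ k, ω k • ContinuousLinearMap.adjoint (L k) (R (L k θ) - y k)⟫) ↔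
      ∀ k, R (L k θ) = y k := by
  obtain ⟨hst, hexact⟩ := hθstar
  constructor
  · intro hvi k
    have h := hvi θstar hst
    have hsum : ⟪θstar - θ, ∑ j, ω j • (ContinuousLinearMap.adjoint (L j)) (R (L j θ) - y j)⟫
        = ∑ j, ω j * ⟪L j θstar - L j θ, R (L j θ) - y j⟫ := by
      rw [inner_sum]
      refine Finset.sum_congr rfl fun j _ => ?_
      rw [real_inner_smul_right, ContinuousLinearMap.adjoint_inner_right, map_sub]
    have hterm : ∀ j, ω j * ⟪L j θstar - L j θ, R (L j θ) - y j⟫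
        ≤ -(ω j * ‖R (L j θ) - y j‖ ^ 2) := by
      intro j
      have h1 := hR (L j θ) (L j θstar)
      rw [hexact j] at h1
      have h2 : ⟪L j θstar - L j θ, R (L j θ) - y j⟫ ≤ -‖R (L j θ) - y j‖ ^ 2 := by
        have h3 : ⟪L j θstar - L j θ, R (L j θ) - y j⟫
            = -⟪L j θ - L j θstar, R (L j θ) - y j⟫ := by
          rw [inner_sub_left, inner_sub_left]; ring
        rw [h3]; linarith
      have hωj := (hω j).1
      nlinarith
    have hle : ∑ j, ω j * ‖R (L j θ) - y j‖ ^ 2 ≤ 0 := by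
      have h4 : ∑ j, ω j * ⟪L j θstar - L j θ, R (L j θ) - y j⟫
          ≤ ∑ j, -(ω j * ‖R (L j θ) - y j‖ ^ 2) :=
        Finset.sum_le_sum fun j _ => hterm j
      rw [Finset.sum_neg_distrib] at h4
      linarith [hsum ▸ h]
    have hnn : ∀ j ∈ Finset.univ, 0 ≤ ω j * ‖R (L j θ) - y j‖ ^ 2 := fun j _ =>
      mul_nonneg (hω j).1.le (by positivity)
    have hz : ω k * ‖R (L k θ) - y k‖ ^ 2 = 0 := by
      have := (Finset.sum_eq_zero_iff_of_nonneg hnn).1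
        (le_antisymm hle (Finset.sum_nonneg hnn)) k (Finset.mem_univ k)
      exact this
    have hnorm : ‖R (L k θ) - y k‖ = 0 := by
      have hωk := (hω k).1
      have : ‖R (L k θ) - y k‖ ^ 2 = 0 := by
        rcases mul_eq_zero.1 hz with h | h
        · exact absurd h hωk.ne'
        · exact h
      exact pow_eq_zero_iff (two_ne_zero) |>.1 this
    have := norm_eq_zero.1 hnorm
    exact sub_eq_zero.1 this
  · intro hsol ϑ hϑC
    have : (∑ k, ω k • (ContinuousLinearMap.adjoint (L k)) (R (L k θ) - y k)) = 0 := by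
      refine Finset.sum_eq_zero fun j _ => ?_
      rw [hsol j, sub_self, map_zero, smul_zero]
    rw [this, inner_zero_right]
end

section
/- Let Θ and G be finite-dimensional real inner product spaces, let L : Θ → G be a nonzero continuous linear map, let y ∈ G, and let R : G → G be firmly nonexpansive. Then the operator F : Θ → Θ defined by F(θ) = L*(R(L θ) − y) is (1/‖L‖²)-cocoercive: for all θ_1, θ_2 ∈ Θ, ⟨θ_1 − θ_2, F θ_1 − F θ_2⟩ ≥ (1/‖L‖²) ‖F θ_1 − F θ_2‖². -/
open scoped RealInnerProductSpace

/-- F(θ) = L*(R(Lθ) − y) is (1/‖L‖²)-cocoercive whenever R is firmly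
nonexpansive and L ≠ 0. -/
theorem cocoercive_adjoint_comp
    {Θ G : Type*} [NormedAddCommGroup Θ] [InnerProductSpace ℝ Θ] [FiniteDimensional ℝ Θ]
    [NormedAddCommGroup G] [InnerProductSpace ℝ G] [FiniteDimensional ℝ G]
    (L : Θ →L[ℝ] G) (hL : L ≠ 0) (y : G)
    (R : G → G) (hR : ∀ z₁ z₂ : G, ‖R z₁ - R z₂‖ ^ 2 ≤ ⟪z₁ - z₂, R z₁ - R z₂⟫)
    (F : Θ → Θ) (hF : ∀ θ : Θ, F θ = ContinuousLinearMap.adjoint L (R (L θ) - y)) :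
    ∀ θ₁ θ₂ : Θ, (1 / ‖L‖ ^ 2) * ‖F θ₁ - F θ₂‖ ^ 2 ≤ ⟪θ₁ - θ₂, F θ₁ - F θ₂⟫ := by
  intro θ₁ θ₂
  have hLpos : (0:ℝ) < ‖L‖ := norm_pos_iff.mpr hL
  set w : G := R (L θ₁) - R (L θ₂) with hw
  have hFdiff : F θ₁ - F θ₂ = ContinuousLinearMap.adjoint L w := by
    rw [hF, hF, ← map_sub]
    congr 1
    rw [hw]
    abel
  have hinner : ⟪θ₁ - θ₂, F θ₁ - F θ₂⟫ = ⟪L θ₁ - L θ₂, w⟫ := by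
    rw [hFdiff, ContinuousLinearMap.adjoint_inner_right, map_sub]
  have h1 : ‖w‖ ^ 2 ≤ ⟪θ₁ - θ₂, F θ₁ - F θ₂⟫ := by
    rw [hinner]
    exact hR (L θ₁) (L θ₂)
  have h2 : ‖F θ₁ - F θ₂‖ ≤ ‖L‖ * ‖w‖ := by
    rw [hFdiff]
    calc ‖ContinuousLinearMap.adjoint L w‖ ≤ ‖ContinuousLinearMap.adjoint L‖ * ‖w‖ :=
          ContinuousLinearMap.le_opNorm _ w
      _ = ‖L‖ * ‖w‖ := by rw [LinearIsometryEquiv.norm_map]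
  have h3 : ‖F θ₁ - F θ₂‖ ^ 2 ≤ ‖L‖ ^ 2 * ‖w‖ ^ 2 := by
    have := mul_self_le_mul_self (norm_nonneg _) h2
    nlinarith [norm_nonneg (F θ₁ - F θ₂), norm_nonneg w]
  calc (1 / ‖L‖ ^ 2) * ‖F θ₁ - F θ₂‖ ^ 2 ≤ (1 / ‖L‖ ^ 2) * (‖L‖ ^ 2 * ‖w‖ ^ 2) := by
        apply mul_le_mul_of_nonneg_left h3 (by positivity)
    _ = ‖w‖ ^ 2 := by field_simp
    _ ≤ _ := h1
end

section
/- Let Θ and G be finite-dimensional real inner product spaces, let K be a positive integer, let L_1,…,L_K : Θ → G be continuous linear maps not all zero, let y_1,…,y_K ∈ G, let ω_1,…,ω_K ∈ [0,1] with ω_1+⋯+ω_K = 1, and let R : G → G be firmly nonexpansive. Then the operator F : Θ → Θ defined by F(θ) = Σ_{k=1}^K ω_k L_k*(R(L_k θ) − y_k) is monotone and Lipschitz continuous with Lipschitz constant max_{1≤k≤K}‖L_k‖². -/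
open scoped RealInnerProductSpace

/-- F(θ) = Σ_k ω_k L_k*(R(L_k θ) − y_k) is monotone and Lipschitz continuous
with constant max_k ‖L_k‖². -/
theorem sum_operator_monotone_lipschitz
    {Θ G : Type*} [NormedAddCommGroup Θ] [InnerProductSpace ℝ Θ] [FiniteDimensional ℝ Θ]
    [NormedAddCommGroup G] [InnerProductSpace ℝ G] [FiniteDimensional ℝ G]
    (K : ℕ) (hK : 0 < K)
    (L : Fin K → Θ →L[ℝ] G) (hL : ∃ k, L k ≠ 0) (y : Fin K → G)
    (ω : Fin K → ℝ) (hω : ∀ k, ω k ∈ Set.Icc (0 : ℝ) 1) (hωsum : ∑ k, ω k = 1)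
    (R : G → G) (hR : ∀ z₁ z₂ : G, ‖R z₁ - R z₂‖ ^ 2 ≤ ⟪z₁ - z₂, R z₁ - R z₂⟫)
    (F : Θ → Θ)
    (hF : ∀ θ : Θ, F θ = ∑ k, ω k • ContinuousLinearMap.adjoint (L k) (R (L k θ) - y k)) :
    (∀ θ₁ θ₂ : Θ, 0 ≤ ⟪θ₁ - θ₂, F θ₁ - F θ₂⟫) ∧
      (∀ θ₁ θ₂ : Θ,
        ‖F θ₁ - F θ₂‖ ≤
          (Finset.univ.sup' (Finset.univ_nonempty_iff.mpr ⟨⟨0, hK⟩⟩) fun k => ‖L k‖ ^ 2) *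
            ‖θ₁ - θ₂‖) := by
  have hRne : ∀ z₁ z₂ : G, ‖R z₁ - R z₂‖ ≤ ‖z₁ - z₂‖ := by
    intro z₁ z₂
    rcases eq_or_lt_of_le (norm_nonneg (R z₁ - R z₂)) with h | h
    · rw [← h]; exact norm_nonneg _
    · have h1 := hR z₁ z₂
      have h2 := real_inner_le_norm (z₁ - z₂) (R z₁ - R z₂)
      nlinarith
  have hdiff : ∀ θ₁ θ₂ : Θ, F θ₁ - F θ₂ =
      ∑ k, ω k • (ContinuousLinearMap.adjoint (L k)) (R (L k θ₁) - R (L k θ₂)) := by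
    intro θ₁ θ₂
    rw [hF, hF, ← Finset.sum_sub_distrib]
    refine Finset.sum_congr rfl fun k _ => ?_
    rw [← smul_sub, ← map_sub]
    congr 1
    abel
  constructor
  · intro θ₁ θ₂
    rw [hdiff, inner_sum]
    refine Finset.sum_nonneg fun k _ => ?_
    rw [real_inner_smul_right, ContinuousLinearMap.adjoint_inner_right]
    have h1 := hR (L k θ₁) (L k θ₂)
    have h2 : (0:ℝ) ≤ ‖R (L k θ₁) - R (L k θ₂)‖ ^ 2 := sq_nonneg _
    have h3 : ⟪L k (θ₁ - θ₂), R (L k θ₁) - R (L k θ₂)⟫ =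
        ⟪L k θ₁ - L k θ₂, R (L k θ₁) - R (L k θ₂)⟫ := by rw [map_sub]
    have := (hω k).1
    nlinarith [h2.trans h1, h3]
  · intro θ₁ θ₂
    rw [hdiff]
    set M := (Finset.univ.sup' (Finset.univ_nonempty_iff.mpr ⟨⟨0, hK⟩⟩) fun k => ‖L k‖ ^ 2)
      with hM
    calc ‖∑ k, ω k • (ContinuousLinearMap.adjoint (L k)) (R (L k θ₁) - R (L k θ₂))‖
        ≤ ∑ k, ‖ω k • (ContinuousLinearMap.adjoint (L k)) (R (L k θ₁) - R (L k θ₂))‖ :=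
          norm_sum_le _ _
      _ ≤ ∑ k, ω k * (M * ‖θ₁ - θ₂‖) := by
          refine Finset.sum_le_sum fun k _ => ?_
          rw [norm_smul, Real.norm_eq_abs, abs_of_nonneg (hω k).1]
          refine mul_le_mul_of_nonneg_left ?_ (hω k).1
          have h1 : ‖(ContinuousLinearMap.adjoint (L k)) (R (L k θ₁) - R (L k θ₂))‖ ≤
              ‖L k‖ * ‖R (L k θ₁) - R (L k θ₂)‖ := by
            have := (ContinuousLinearMap.adjoint (L k)).le_opNorm
              (R (L k θ₁) - R (L k θ₂))
            rwa [LinearIsometryEquiv.norm_map ContinuousLinearMap.adjoint (L k)] at this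
          have h2 : ‖R (L k θ₁) - R (L k θ₂)‖ ≤ ‖L k‖ * ‖θ₁ - θ₂‖ := by
            refine (hRne _ _).trans ?_
            have := (L k).le_opNorm (θ₁ - θ₂)
            rwa [map_sub] at this
          have h3 : ‖L k‖ ^ 2 ≤ M := by
            rw [hM]; exact Finset.le_sup' (fun k => ‖L k‖ ^ 2) (Finset.mem_univ k)
          nlinarith [norm_nonneg (L k), norm_nonneg (θ₁ - θ₂),
            norm_nonneg (R (L k θ₁) - R (L k θ₂))]
      _ = M * ‖θ₁ - θ₂‖ := by rw [← Finset.sum_mul, hωsum, one_mul]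
end

section
/- Let Θ be a finite-dimensional real inner product space, let C ⊆ Θ be a nonempty closed convex set, let β > 0, let F : Θ → Θ be β-cocoercive, and let γ ∈ (0, 2β). Suppose the variational inequality — find θ ∈ C such that ⟨ϑ − θ, F θ⟩ ≥ 0 for all ϑ ∈ C — has at least one solution. Given θ_0 ∈ Θ, define θ_{n+1} = P_C(θ_n − γ F θ_n) for all n ∈ ℕ. Then the sequence (θ_n)_{n∈ℕ} converges to a solution of the variational inequality. -/
open scoped RealInnerProductSpace
open Filter

/-- the projected forward iteration θ_{n+1} = P_C(θ_n − γFθ_n) with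
β-cocoercive F and γ ∈ (0, 2β) converges to a solution of the variational inequality,
provided one exists. -/
theorem proj_gradient_converges
    {Θ : Type*} [NormedAddCommGroup Θ] [InnerProductSpace ℝ Θ] [FiniteDimensional ℝ Θ]
    {C : Set Θ} (hCne : C.Nonempty) (hCcl : IsClosed C) (hCcv : Convex ℝ C)
    (β : ℝ) (hβ : 0 < β)
    (F : Θ → Θ) (hF : ∀ x y : Θ, β * ‖F x - F y‖ ^ 2 ≤ ⟪x - y, F x - F y⟫)
    (γ : ℝ) (hγ : γ ∈ Set.Ioo 0 (2 * β))
    (hsol : ∃ θ ∈ C, ∀ ϑ ∈ C, 0 ≤ ⟪ϑ - θ, F θ⟫)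
    (P : Θ → Θ) (hP : ∀ x : Θ, P x ∈ C ∧ ∀ c ∈ C, ‖x - P x‖ ≤ ‖x - c‖)
    (θ : ℕ → Θ) (hrec : ∀ n : ℕ, θ (n + 1) = P (θ n - γ • F (θ n))) :
    ∃ θstar : Θ, (θstar ∈ C ∧ ∀ ϑ ∈ C, 0 ≤ ⟪ϑ - θstar, F θstar⟫) ∧
      Tendsto θ atTop (nhds θstar) := by
  obtain ⟨hγ0, hγ2β⟩ := hγ
  have hPmem : ∀ x, P x ∈ C := fun x => (hP x).1
  -- variational characterization of the projection
  haveI : Nonempty C := hCne.to_subtype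
  have hchar : ∀ x, ∀ c ∈ C, ⟪x - P x, c - P x⟫ ≤ 0 := by
    intro x c hc
    have h1 : ‖x - P x‖ = ⨅ w : C, ‖x - (w : Θ)‖ := by
      refine le_antisymm (le_ciInf fun w => (hP x).2 w w.2) ?_
      have hbd : BddBelow (Set.range fun w : C => ‖x - (w : Θ)‖) :=
        ⟨0, by rintro _ ⟨w, rfl⟩; positivity⟩
      exact ciInf_le hbd ⟨P x, hPmem x⟩
    exact (norm_eq_iInf_iff_real_inner_le_zero hCcv (hPmem x)).1 h1 c hc
  -- firm nonexpansiveness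
  have hfirm : ∀ x y : Θ, ‖P x - P y‖ ^ 2 ≤ ⟪x - y, P x - P y⟫ := by
    intro x y
    have h1 := hchar x (P y) (hPmem y)
    have h2 := hchar y (P x) (hPmem x)
    have e : ⟪x - y, P x - P y⟫
        = ⟪x - P x, P x - P y⟫ + ⟪P x - P y, P x - P y⟫ + ⟪P y - y, P x - P y⟫ := by
      rw [← inner_add_left, ← inner_add_left]
      congr 1
      abel
    have e1 : ⟪x - P x, P y - P x⟫ = -⟪x - P x, P x - P y⟫ := by
      rw [show P y - P x = -(P x - P y) by abel, inner_neg_right]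
    have e2 : ⟪y - P y, P x - P y⟫ = -⟪P y - y, P x - P y⟫ := by
      rw [show (y : Θ) - P y = -(P y - y) by abel, inner_neg_left]
    have e3 : ⟪P x - P y, P x - P y⟫ = ‖P x - P y‖ ^ 2 := real_inner_self_eq_norm_sq _
    linarith
  -- uniqueness of the projection
  have huniq : ∀ x p, p ∈ C → (∀ c ∈ C, ⟪x - p, c - p⟫ ≤ 0) → P x = p := by
    intro x p hpC hp
    have h1 := hchar x p hpC
    have h2 := hp (P x) (hPmem x)
    have e : ⟪P x - p, P x - p⟫
        = ⟪x - p, P x - p⟫ - ⟪x - P x, P x - p⟫ := by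
      rw [← inner_sub_left]
      congr 1
      abel
    have e2 : ⟪x - P x, P x - p⟫ = -⟪x - P x, p - P x⟫ := by
      rw [show P x - p = -(p - P x) by abel, inner_neg_right]
    have e3 : ⟪P x - p, P x - p⟫ = ‖P x - p‖ ^ 2 := real_inner_self_eq_norm_sq _
    have h5 : ‖P x - p‖ ^ 2 ≤ 0 := by linarith
    have h6 : ‖P x - p‖ = 0 := by nlinarith [norm_nonneg (P x - p)]
    exact sub_eq_zero.mp (norm_eq_zero.mp h6)
  -- fixed points are solutions of the VI and vice versa
  have hfix_of_sol : ∀ z, z ∈ C → (∀ ϑ ∈ C, 0 ≤ ⟪ϑ - z, F z⟫) → P (z - γ • F z) = z := by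
    intro z hzC hzVI
    refine huniq _ z hzC fun c hc => ?_
    have : z - γ • F z - z = -(γ • F z) := by abel
    rw [this, inner_neg_left, real_inner_smul_left, real_inner_comm]
    have := hzVI c hc
    nlinarith
  have hsol_of_fix : ∀ z, P (z - γ • F z) = z →
      z ∈ C ∧ ∀ ϑ ∈ C, 0 ≤ ⟪ϑ - z, F z⟫ := by
    intro z hz
    have hzC : z ∈ C := hz ▸ hPmem _
    refine ⟨hzC, fun c hc => ?_⟩
    have h1 := hchar (z - γ • F z) c hc
    rw [hz] at h1
    have e : z - γ • F z - z = -(γ • F z) := by abel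
    rw [e, inner_neg_left, real_inner_smul_left, real_inner_comm] at h1
    nlinarith
  -- the key Fejér-type inequality
  have hkey : ∀ z, P (z - γ • F z) = z → ∀ n : ℕ,
      ‖θ (n+1) - z‖ ^ 2 + ‖θ n - γ • F (θ n) - θ (n+1) + γ • F z‖ ^ 2
        + γ * (2 * β - γ) * ‖F (θ n) - F z‖ ^ 2 ≤ ‖θ n - z‖ ^ 2 := by
    intro z hzfix n
    set u := θ n - γ • F (θ n) with hu
    set v := z - γ • F z with hv
    have hPu : P u = θ (n+1) := (hrec n).symm
    have hf := hfirm u v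
    rw [hPu, hzfix] at hf
    -- step A
    have hexpA := norm_sub_sq_real (u - v) (θ (n+1) - z)
    have eA : ⟪u - v, u - v⟫ = ‖u - v‖ ^ 2 := real_inner_self_eq_norm_sq _
    have hA : ‖θ (n+1) - z‖ ^ 2 + ‖(u - v) - (θ (n+1) - z)‖ ^ 2 ≤ ‖u - v‖ ^ 2 := by
      have e4 : ⟪θ (n+1) - z, θ (n+1) - z⟫ = ‖θ (n+1) - z‖ ^ 2 := real_inner_self_eq_norm_sq _
      nlinarith [hexpA, hf]
    -- rewrite the w-term
    have ew : (u - v) - (θ (n+1) - z) = θ n - γ • F (θ n) - θ (n+1) + γ • F z := by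
      rw [hu, hv]; abel
    rw [ew] at hA
    -- step B
    have huv : u - v = (θ n - z) - γ • (F (θ n) - F z) := by
      rw [hu, hv, smul_sub]; abel
    have hBexp : ‖u - v‖ ^ 2
        = ‖θ n - z‖ ^ 2 - 2 * γ * ⟪θ n - z, F (θ n) - F z⟫ + γ ^ 2 * ‖F (θ n) - F z‖ ^ 2 := by
      rw [huv, norm_sub_sq_real, real_inner_smul_right, norm_smul, Real.norm_eq_abs,
        mul_pow, sq_abs]
      ring
    have hco := hF (θ n) z
    nlinarith [hA, hBexp, hco]
  -- continuity-type estimate for the iteration map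
  have hFlip : ∀ x y : Θ, β * ‖F x - F y‖ ≤ ‖x - y‖ := by
    intro x y
    rcases eq_or_lt_of_le (norm_nonneg (F x - F y)) with h | h
    · rw [← h]; simp [norm_nonneg]
    · have h1 := hF x y
      have h2 := real_inner_le_norm (x - y) (F x - F y)
      nlinarith
  have hPlip : ∀ x y : Θ, ‖P x - P y‖ ≤ ‖x - y‖ := by
    intro x y
    rcases eq_or_lt_of_le (norm_nonneg (P x - P y)) with h | h
    · rw [← h]; exact norm_nonneg _
    · have h1 := hfirm x y
      have h2 := real_inner_le_norm (x - y) (P x - P y)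
      nlinarith
  have hTlip : ∀ x y : Θ, ‖P (x - γ • F x) - P (y - γ • F y)‖ ≤ (1 + γ / β) * ‖x - y‖ := by
    intro x y
    have h1 := hPlip (x - γ • F x) (y - γ • F y)
    have e : x - γ • F x - (y - γ • F y) = (x - y) - γ • (F x - F y) := by
      rw [smul_sub]; abel
    rw [e] at h1
    have h2 : ‖(x - y) - γ • (F x - F y)‖ ≤ ‖x - y‖ + γ * ‖F x - F y‖ := by
      calc ‖(x - y) - γ • (F x - F y)‖ ≤ ‖x - y‖ + ‖γ • (F x - F y)‖ := norm_sub_le _ _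
        _ = ‖x - y‖ + γ * ‖F x - F y‖ := by
            rw [norm_smul, Real.norm_eq_abs, abs_of_pos hγ0]
    have h3 := hFlip x y
    have h4 : γ * ‖F x - F y‖ ≤ γ / β * ‖x - y‖ := by
      rw [div_mul_eq_mul_div, le_div_iff₀ hβ]
      nlinarith
    nlinarith
  -- get a solution, hence a fixed point
  obtain ⟨z, hzC, hzVI⟩ := hsol
  have hzfix := hfix_of_sol z hzC hzVI
  -- Fejér monotone quantities
  set a : ℕ → ℝ := fun n => ‖θ n - z‖ ^ 2 with ha
  have hcoef : 0 < γ * (2 * β - γ) := mul_pos hγ0 (by linarith)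
  have hanti : ∀ n, a (n+1) ≤ a n := by
    intro n
    simp only [ha]
    have := hkey z hzfix n
    nlinarith [sq_nonneg ‖θ n - γ • F (θ n) - θ (n+1) + γ • F z‖,
      sq_nonneg ‖F (θ n) - F z‖]
  have haAnti : Antitone a := antitone_nat_of_succ_le hanti
  have hbdd : BddBelow (Set.range a) := ⟨0, by rintro _ ⟨n, rfl⟩; positivity⟩
  have haL : Tendsto a atTop (nhds (⨅ i, a i)) := tendsto_atTop_ciInf haAnti hbdd
  have haL1 : Tendsto (fun n => a (n+1)) atTop (nhds (⨅ i, a i)) :=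
    haL.comp (tendsto_add_atTop_nat 1)
  have hdiff : Tendsto (fun n => a n - a (n+1)) atTop (nhds 0) := by
    simpa using haL.sub haL1
  -- the residual terms go to zero
  have hsq_to_zero : ∀ (w : ℕ → Θ), Tendsto (fun n => ‖w n‖ ^ 2) atTop (nhds 0) →
      Tendsto w atTop (nhds 0) := by
    intro w hw
    rw [tendsto_iff_norm_sub_tendsto_zero]
    simp only [sub_zero]
    have h2 : (fun n => ‖w n‖) = (fun x => Real.sqrt x) ∘ (fun n => ‖w n‖ ^ 2) := by
      funext n
      exact (Real.sqrt_sq (norm_nonneg _)).symm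
    rw [h2]
    have := (Real.continuous_sqrt.tendsto 0).comp hw
    simpa using this
  have hwlim : Tendsto (fun n => θ n - γ • F (θ n) - θ (n+1) + γ • F z) atTop (nhds 0) := by
    refine hsq_to_zero _ (squeeze_zero (fun n => sq_nonneg _) (fun n => ?_) hdiff)
    simp only [ha]
    have := hkey z hzfix n
    nlinarith [sq_nonneg ‖θ (n+1) - z‖, sq_nonneg ‖F (θ n) - F z‖]
  have hdlim : Tendsto (fun n => F (θ n) - F z) atTop (nhds 0) := by
    have hdiff' : Tendsto (fun n => (γ * (2 * β - γ))⁻¹ * (a n - a (n+1))) atTop (nhds 0) := by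
      simpa using hdiff.const_mul (γ * (2 * β - γ))⁻¹
    refine hsq_to_zero _ (squeeze_zero (fun n => sq_nonneg _) (fun n => ?_) hdiff')
    have h2 : γ * (2 * β - γ) * ‖F (θ n) - F z‖ ^ 2 ≤ a n - a (n+1) := by
      simp only [ha]
      have := hkey z hzfix n
      nlinarith [sq_nonneg ‖θ (n+1) - z‖, sq_nonneg ‖θ n - γ • F (θ n) - θ (n+1) + γ • F z‖]
    calc ‖F (θ n) - F z‖ ^ 2 ≤ (γ * (2 * β - γ))⁻¹ * (γ * (2 * β - γ) * ‖F (θ n) - F z‖ ^ 2) := by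
          rw [inv_mul_cancel_left₀ hcoef.ne']
      _ ≤ (γ * (2 * β - γ))⁻¹ * (a n - a (n+1)) := by
          exact mul_le_mul_of_nonneg_left h2 (inv_nonneg.mpr hcoef.le)
  have hstep : Tendsto (fun n => θ (n+1) - θ n) atTop (nhds 0) := by
    have e : (fun n => θ (n+1) - θ n)
        = fun n => -(θ n - γ • F (θ n) - θ (n+1) + γ • F z) - γ • (F (θ n) - F z) := by
      funext n
      rw [smul_sub]; abel
    rw [e]
    simpa using hwlim.neg.sub (hdlim.const_smul γ)
  -- boundedness and convergent subsequence
  have hbddseq : ∀ n, θ n ∈ Metric.closedBall z ‖θ 0 - z‖ := by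
    intro n
    rw [Metric.mem_closedBall, dist_eq_norm]
    have h1 : a n ≤ a 0 := haAnti (Nat.zero_le n)
    have := Real.sqrt_le_sqrt h1
    rwa [ha, Real.sqrt_sq (norm_nonneg _), Real.sqrt_sq (norm_nonneg _)] at this
  obtain ⟨t, -, φ, hφ, hsub⟩ :=
    tendsto_subseq_of_bounded Metric.isBounded_closedBall hbddseq
  -- the shifted subsequence converges to the same limit
  have hsub1 : Tendsto (fun k => θ (φ k + 1)) atTop (nhds t) := by
    have h1 : Tendsto (fun k => θ (φ k + 1) - θ (φ k)) atTop (nhds 0) :=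
      hstep.comp hφ.tendsto_atTop
    have := h1.add hsub
    simpa using this
  -- t is a fixed point
  have htfix : P (t - γ • F t) = t := by
    have h1 : Tendsto (fun k => P (θ (φ k) - γ • F (θ (φ k)))) atTop
        (nhds (P (t - γ • F t))) := by
      rw [tendsto_iff_norm_sub_tendsto_zero]
      refine squeeze_zero (fun k => norm_nonneg _) (fun k => hTlip (θ (φ k)) t) ?_
      have : Tendsto (fun k => ‖θ (φ k) - t‖) atTop (nhds 0) := by
        rw [← tendsto_iff_norm_sub_tendsto_zero]
        exact hsub
      simpa using this.const_mul (1 + γ / β)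
    have h2 : Tendsto (fun k => P (θ (φ k) - γ • F (θ (φ k)))) atTop (nhds t) := by
      have e : (fun k => P (θ (φ k) - γ • F (θ (φ k)))) = fun k => θ (φ k + 1) := by
        funext k; exact (hrec (φ k)).symm
      rw [e]; exact hsub1
    exact tendsto_nhds_unique h1 h2
  obtain ⟨htC, htVI⟩ := hsol_of_fix t htfix
  refine ⟨t, ⟨htC, htVI⟩, ?_⟩
  -- Fejér monotonicity w.r.t. t gives convergence of the whole sequence
  set b : ℕ → ℝ := fun n => ‖θ n - t‖ ^ 2 with hb
  have hbanti : Antitone b := by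
    refine antitone_nat_of_succ_le fun n => ?_
    simp only [hb]
    have := hkey t htfix n
    nlinarith [sq_nonneg ‖θ n - γ • F (θ n) - θ (n+1) + γ • F t‖,
      sq_nonneg ‖F (θ n) - F t‖]
  have hbbdd : BddBelow (Set.range b) := ⟨0, by rintro _ ⟨n, rfl⟩; positivity⟩
  have hbL : Tendsto b atTop (nhds (⨅ i, b i)) := tendsto_atTop_ciInf hbanti hbbdd
  have hbsub0 : Tendsto (fun k => b (φ k)) atTop (nhds 0) := by
    have h1 : Tendsto (fun k => ‖θ (φ k) - t‖) atTop (nhds 0) := by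
      rw [← tendsto_iff_norm_sub_tendsto_zero]; exact hsub
    have := h1.mul h1
    simpa [hb, sq] using this
  have hbsubL : Tendsto (fun k => b (φ k)) atTop (nhds (⨅ i, b i)) :=
    hbL.comp hφ.tendsto_atTop
  have hL0 : (⨅ i, b i) = 0 := tendsto_nhds_unique hbsubL hbsub0
  have hb0 : Tendsto b atTop (nhds 0) := hL0 ▸ hbL
  rw [tendsto_iff_norm_sub_tendsto_zero]
  have : Tendsto (fun n => Real.sqrt (b n)) atTop (nhds 0) := by
    have := (Real.continuous_sqrt.tendsto 0).comp hb0
    simpa [Function.comp_def] using this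
  simpa [hb, Real.sqrt_sq (norm_nonneg _)] using this
end
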